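/- arXiv:1605.04554 — 4 statements merged into one kernel-verified Lean document; each statement's English description precedes it below -/
import Mathlib

section
/- For all nonnegative integers $a,b$ with $b \le a-1$ (i.e. $a-b-1 \ge 0$) and any real (or complex) $\nu$, one has $\sum_{m=0}^{b}\frac{(\nu)_m}{m!}\frac{(-\nu)_{a-m}}{(a-m)!}=\frac{(\nu)_{b+1}(-\nu)_{a-b}}{\nu\, a\, b!\,(a-b-1)!}$, where $(\nu)_m = \nu(\nu+1)\cdots(\nu+m-1)$ is the Pochhammer symbol with $(\nu)_0=1$. -/
open Finset

/-- Pochhammer (rising factorial) symbol `(ν)_m = ν(ν+1)⋯(ν+m-1)`, `(ν)_0 = 1`. -/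
noncomputable def poch (ν : ℂ) (m : ℕ) : ℂ := (ascPochhammer ℂ m).eval ν

lemma poch_succ (ν : ℂ) (n : ℕ) : poch ν (n + 1) = poch ν n * (ν + n) := by
  simp [poch, ascPochhammer_succ_right]

lemma poch_zero (ν : ℂ) : poch ν 0 = 1 := by simp [poch]

/-- For nonnegative integers `a, b` with `b + 1 ≤ a` and `ν ≠ 0`,
`∑_{m=0}^{b} (ν)_m/m! ⋅ (-ν)_{a-m}/(a-m)! = (ν)_{b+1}(-ν)_{a-b} / (ν a b! (a-b-1)!)`. -/
theorem sum_poch_factorized (ν : ℂ) (hν : ν ≠ 0) (a b : ℕ) (hab : b + 1 ≤ a) :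
    ∑ m ∈ Finset.range (b + 1),
        poch ν m / (Nat.factorial m : ℂ) * (poch (-ν) (a - m) / (Nat.factorial (a - m) : ℂ))
      = poch ν (b + 1) * poch (-ν) (a - b) /
        (ν * (a : ℂ) * (Nat.factorial b : ℂ) * (Nat.factorial (a - b - 1) : ℂ)) := by
  induction b with
  | zero =>
    obtain ⟨c, rfl⟩ : ∃ c, a = c + 1 := ⟨a - 1, by omega⟩
    rw [Finset.sum_range_one, Nat.sub_zero, poch_zero, poch_succ ν 0, poch_zero,
      Nat.add_sub_cancel, Nat.factorial_zero, Nat.factorial_succ]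
    have h1 : (c.factorial : ℂ) ≠ 0 := Nat.cast_ne_zero.mpr (Nat.factorial_ne_zero c)
    have h2 : ((c : ℂ) + 1) ≠ 0 := by
      have : ((c + 1 : ℕ) : ℂ) ≠ 0 := Nat.cast_ne_zero.mpr (Nat.succ_ne_zero c)
      push_cast at this; exact this
    push_cast
    field_simp
    ring
  | succ b ih =>
    obtain ⟨k, rfl⟩ : ∃ k, a = b + 2 + k := ⟨a - b - 2, by omega⟩
    have hb : b + 1 ≤ b + 2 + k := by omega
    rw [Finset.sum_range_succ, ih hb]
    have e1 : b + 2 + k - b = k + 2 := by omega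
    have e2 : b + 2 + k - b - 1 = k + 1 := by omega
    have e3 : b + 2 + k - (b + 1) = k + 1 := by omega
    have e4 : b + 2 + k - (b + 1) - 1 = k := by omega
    rw [e1, e3]
    simp only [Nat.succ_sub_one]
    rw [poch_succ ν (b+1), poch_succ (-ν) (k+1)]
    have h1 : (b.factorial : ℂ) ≠ 0 := Nat.cast_ne_zero.mpr (Nat.factorial_ne_zero b)
    have h2 : (k.factorial : ℂ) ≠ 0 := Nat.cast_ne_zero.mpr (Nat.factorial_ne_zero k)
    have h3 : ((b + 1).factorial : ℂ) ≠ 0 := Nat.cast_ne_zero.mpr (Nat.factorial_ne_zero _)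
    have h4 : ((k + 1).factorial : ℂ) ≠ 0 := Nat.cast_ne_zero.mpr (Nat.factorial_ne_zero _)
    have h5 : ((b : ℂ) + 2 + k) ≠ 0 := by
      have : ((b + 2 + k : ℕ) : ℂ) ≠ 0 := Nat.cast_ne_zero.mpr (by omega)
      push_cast at this; exact this
    have hf : ((b + 1).factorial : ℂ) = ((b : ℂ) + 1) * b.factorial := by
      rw [Nat.factorial_succ]; push_cast; ring
    have hg : ((k + 1).factorial : ℂ) = ((k : ℂ) + 1) * k.factorial := by
      rw [Nat.factorial_succ]; push_cast; ring
    have hb1 : ((b : ℂ) + 1) ≠ 0 := by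
      have : ((b + 1 : ℕ) : ℂ) ≠ 0 := Nat.cast_ne_zero.mpr (by omega)
      push_cast at this; exact this
    have hk1 : ((k : ℂ) + 1) ≠ 0 := by
      have : ((k + 1 : ℕ) : ℂ) ≠ 0 := Nat.cast_ne_zero.mpr (by omega)
      push_cast at this; exact this
    rw [hf, hg]
    push_cast
    have hD1 : ν * ((b : ℂ) + 2 + k) * (b.factorial : ℂ) * (((k : ℂ) + 1) * (k.factorial : ℂ)) ≠ 0 :=
      mul_ne_zero (mul_ne_zero (mul_ne_zero hν h5) h1) (mul_ne_zero hk1 h2)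
    have hD2 : (((b : ℂ) + 1) * (b.factorial : ℂ)) * (((k : ℂ) + 1) * (k.factorial : ℂ)) ≠ 0 :=
      mul_ne_zero (mul_ne_zero hb1 h1) (mul_ne_zero hk1 h2)
    have hD3 : ν * ((b : ℂ) + 2 + k) * (((b : ℂ) + 1) * (b.factorial : ℂ)) * (k.factorial : ℂ) ≠ 0 :=
      mul_ne_zero (mul_ne_zero (mul_ne_zero hν h5) (mul_ne_zero hb1 h1)) h2
    rw [div_mul_div_comm, div_add_div _ _ hD1 hD2, div_eq_div_iff (mul_ne_zero hD1 hD2) hD3]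
    ring
end

section
/- For all nonnegative integers $a,b$ and any complex $\nu$ with $\nu\ne 0$ and $a+\nu\ne 0$, one has $\sum_{m=0}^{b}\frac{(-\nu)_m}{m!}\frac{(\nu)_{a+m}}{(a+m)!}=-\frac{(-\nu)_{b+1}(\nu)_{a+b+1}}{\nu(a+\nu)\,b!\,(a+b)!}$. -/
open Finset

/-- For nonnegative integers `a, b` and `ν ≠ 0`, `ν ≠ -a`,
`∑_{m=0}^{b} (-ν)_m/m! ⋅ (ν)_{a+m}/(a+m)! = -(-ν)_{b+1}(ν)_{a+b+1} / (ν(a+ν) b! (a+b)!)`. -/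
theorem sum_poch_factorized' (ν : ℂ) (hν : ν ≠ 0) (a b : ℕ) (hν' : (a : ℂ) + ν ≠ 0) :
    ∑ m ∈ Finset.range (b + 1),
        poch (-ν) m / (Nat.factorial m : ℂ) * (poch ν (a + m) / (Nat.factorial (a + m) : ℂ))
      = -(poch (-ν) (b + 1) * poch ν (a + b + 1)) /
        (ν * ((a : ℂ) + ν) * (Nat.factorial b : ℂ) * (Nat.factorial (a + b) : ℂ)) := by
  have hfac : ∀ n : ℕ, (Nat.factorial n : ℂ) ≠ 0 := fun n =>
    Nat.cast_ne_zero.mpr (Nat.factorial_ne_zero n)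
  induction b with
  | zero =>
    simp only [Finset.sum_range_one, Nat.factorial_zero, Nat.add_zero, Nat.cast_one, zero_add]
    rw [poch_succ, poch_succ]
    simp only [poch_zero, Nat.cast_zero, add_zero, div_one, one_mul]
    rw [div_eq_div_iff (hfac a)
      (mul_ne_zero (mul_ne_zero (mul_ne_zero hν hν') one_ne_zero) (hfac a))]
    ring
  | succ b ih =>
    rw [Finset.sum_range_succ, ih]
    have hD1 : ν * ((a : ℂ) + ν) * (Nat.factorial b : ℂ) * (Nat.factorial (a + b) : ℂ) ≠ 0 :=
      mul_ne_zero (mul_ne_zero (mul_ne_zero hν hν') (hfac b)) (hfac (a + b))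
    have hD2 : ((Nat.factorial (b + 1) : ℂ)) * (Nat.factorial (a + (b + 1)) : ℂ) ≠ 0 :=
      mul_ne_zero (hfac (b + 1)) (hfac (a + (b + 1)))
    have hD3 : ν * ((a : ℂ) + ν) * (Nat.factorial (b + 1) : ℂ) *
        (Nat.factorial (a + (b + 1)) : ℂ) ≠ 0 :=
      mul_ne_zero (mul_ne_zero (mul_ne_zero hν hν') (hfac (b + 1))) (hfac (a + (b + 1)))
    rw [div_mul_div_comm, div_add_div _ _ hD1 hD2,
      div_eq_div_iff (mul_ne_zero hD1 hD2) hD3]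
    have e1 : a + (b + 1) = (a + b) + 1 := by omega
    rw [e1, poch_succ (-ν) (b+1), poch_succ ν ((a+b)+1), poch_succ ν (a+b),
      Nat.factorial_succ b, Nat.factorial_succ (a+b)]
    push_cast
    ring
end

section
/- Sum rule for $U(1)$ matrix elements: for complex parameters $\alpha_1,\alpha_2$ and $|t|<1$, $\sum_{Y}t^{|Y|}\,\frac{Z_b(\alpha_1|\emptyset,Y)\,Z_b(\alpha_2|Y,\emptyset)}{Z_0(Y)}=(1-t)^{\alpha_1\alpha_2}$, where the sum runs over all partitions $Y$. -/
open Finset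

/-- Arm length (possibly negative, as a rational) of the box `s = (i,j)` relative to the
Young diagram `Y`: `a_Y(s) = Y_i - j - 1` (0-indexed rows/columns). -/
noncomputable def armQ (Y : YoungDiagram) (s : ℕ × ℕ) : ℚ :=
  (Y.rowLen s.1 : ℚ) - s.2 - 1

/-- Leg length (possibly negative, as a rational) of the box `s = (i,j)` relative to the
Young diagram `Y`: `l_Y(s) = Y'_j - i - 1` (0-indexed rows/columns). -/
noncomputable def legQ (Y : YoungDiagram) (s : ℕ × ℕ) : ℚ :=
  (Y.colLen s.2 : ℚ) - s.1 - 1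

/-- Nekrasov bifundamental factor at `c = 1`:
`Z_b(ν|Y',Y) = ∏_{t∈Y}(1 + a_Y(t) + l_{Y'}(t) + ν) ⋅ ∏_{s∈Y'}(1 + a_{Y'}(s) + l_Y(s) - ν)`. -/
noncomputable def Zb (ν : ℚ) (Y' Y : YoungDiagram) : ℚ :=
  (∏ t ∈ Y.cells, (1 + armQ Y t + legQ Y' t + ν)) *
    ∏ s ∈ Y'.cells, (1 + armQ Y' s + legQ Y s - ν)

/-- `Z₀(Y) = Z_b(0|Y,Y)`. -/
noncomputable def Z0 (Y : YoungDiagram) : ℚ := Zb 0 Y Y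

open Polynomial

namespace U1


/-- hook length as a rational -/
noncomputable def hookQ (Y : YoungDiagram) (i j : ℕ) : ℚ :=
  (Y.rowLen i : ℚ) - j + (Y.colLen j : ℚ) - i - 1

lemma hookQ_pos {Y : YoungDiagram} {i j : ℕ} (h : (i, j) ∈ Y) : 0 < hookQ Y i j := by
  have h1 : j < Y.rowLen i := YoungDiagram.mem_iff_lt_rowLen.mp h
  have h2 : i < Y.colLen j := YoungDiagram.mem_iff_lt_colLen.mp h
  have h1' : (j : ℚ) + 1 ≤ Y.rowLen i := by exact_mod_cast h1
  have h2' : (i : ℚ) + 1 ≤ Y.colLen j := by exact_mod_cast h2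
  unfold hookQ; linarith

noncomputable def Hk (Y : YoungDiagram) : ℚ := ∏ c ∈ Y.cells, hookQ Y c.1 c.2

noncomputable def Ct (x : ℚ) (Y : YoungDiagram) : ℚ := ∏ c ∈ Y.cells, (x + c.2 - c.1)

lemma Hk_pos (Y : YoungDiagram) : 0 < Hk Y :=
  Finset.prod_pos fun c hc => hookQ_pos (by rwa [YoungDiagram.mem_cells] at hc; )

lemma rowLen_le_of_colLen_le {Y : YoungDiagram} {i M : ℕ} (hM : Y.colLen 0 ≤ M)
    (hi : M ≤ i) : Y.rowLen i = 0 := by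
  by_contra h
  have h0 : (i, 0) ∈ Y := YoungDiagram.mem_iff_lt_rowLen.mpr (Nat.pos_of_ne_zero h)
  have := YoungDiagram.mem_iff_lt_colLen.mp h0
  omega

lemma cells_eq_biUnion (Y : YoungDiagram) {M : ℕ} (hM : Y.colLen 0 ≤ M) :
    Y.cells = (range M).biUnion (fun i => {i} ×ˢ range (Y.rowLen i)) := by
  ext ⟨i, j⟩
  simp only [mem_biUnion, mem_range, mem_product, mem_singleton, YoungDiagram.mem_cells]
  constructor
  · intro h
    have h2 : i < Y.colLen j := YoungDiagram.mem_iff_lt_colLen.mp h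
    have h3 : Y.colLen j ≤ Y.colLen 0 := Y.colLen_anti 0 j (Nat.zero_le j)
    exact ⟨i, by omega, rfl, YoungDiagram.mem_iff_lt_rowLen.mp h⟩
  · rintro ⟨i', _, rfl, hj⟩
    exact YoungDiagram.mem_iff_lt_rowLen.mpr hj

lemma prod_cells (Y : YoungDiagram) {M : ℕ} (hM : Y.colLen 0 ≤ M) (f : ℕ → ℕ → ℚ) :
    ∏ c ∈ Y.cells, f c.1 c.2 = ∏ i ∈ range M, ∏ j ∈ range (Y.rowLen i), f i j := by
  rw [cells_eq_biUnion Y hM, Finset.prod_biUnion]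
  · refine Finset.prod_congr rfl fun i _ => ?_
    rw [Finset.prod_product]
    simp
  · intro a _ b _ hab
    simp only [Finset.disjoint_left]
    rintro ⟨x, y⟩ hx hy
    simp only [mem_product, mem_singleton] at hx hy
    exact hab (hx.1 ▸ hy.1 ▸ rfl)

lemma card_cells (Y : YoungDiagram) {M : ℕ} (hM : Y.colLen 0 ≤ M) :
    Y.cells.card = ∑ i ∈ range M, Y.rowLen i := by
  rw [cells_eq_biUnion Y hM, Finset.card_biUnion]
  · refine Finset.sum_congr rfl fun i _ => ?_
    simp
  · intro a _ b _ hab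
    simp only [Finset.disjoint_left]
    rintro ⟨x, y⟩ hx hy
    simp only [mem_product, mem_singleton] at hx hy
    exact hab (hx.1 ▸ hy.1 ▸ rfl)



lemma rowLen_eq {Y : YoungDiagram} {i k : ℕ} (hin : ∀ j < k, (i, j) ∈ Y)
    (hout : (i, k) ∉ Y) : Y.rowLen i = k := by
  have h1 : Y.rowLen i ≤ k := by
    by_contra h
    exact hout (YoungDiagram.mem_iff_lt_rowLen.mpr (by omega))
  rcases Nat.eq_zero_or_pos k with rfl | hk
  · omega
  · have := YoungDiagram.mem_iff_lt_rowLen.mp (hin (k - 1) (by omega))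
    omega

lemma colLen_eq {Y : YoungDiagram} {j k : ℕ} (hin : ∀ i < k, (i, j) ∈ Y)
    (hout : (k, j) ∉ Y) : Y.colLen j = k := by
  have h1 : Y.colLen j ≤ k := by
    by_contra h
    exact hout (YoungDiagram.mem_iff_lt_colLen.mpr (by omega))
  rcases Nat.eq_zero_or_pos k with rfl | hk
  · omega
  · have := YoungDiagram.mem_iff_lt_colLen.mp (hin (k - 1) (by omega))
    omega

def addable (Y : YoungDiagram) (i : ℕ) : Prop := ∀ r < i, Y.rowLen i < Y.rowLen r

instance (Y : YoungDiagram) (i : ℕ) : Decidable (addable Y i) := by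
  unfold addable; infer_instance

lemma not_mem_self_rowLen (Y : YoungDiagram) (i : ℕ) : (i, Y.rowLen i) ∉ Y := by
  rw [YoungDiagram.mem_iff_lt_rowLen]; omega

lemma addable_lowerSet {Y : YoungDiagram} {i : ℕ} (h : addable Y i) :
    IsLowerSet (↑(insert (i, Y.rowLen i) Y.cells) : Set (ℕ × ℕ)) := by
  intro p q hle hp
  obtain ⟨q1, q2⟩ := q
  obtain ⟨p1, p2⟩ := p
  obtain ⟨hx, hy⟩ : q1 ≤ p1 ∧ q2 ≤ p2 := Prod.mk_le_mk.mp hle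
  simp only [coe_insert, Set.mem_insert_iff, mem_coe, YoungDiagram.mem_cells] at hp ⊢
  rcases hp with hp | hp
  · obtain ⟨he1, he2⟩ : p1 = i ∧ p2 = Y.rowLen i := Prod.mk.injEq .. ▸ hp
    rcases Nat.lt_or_ge q2 (Y.rowLen i) with h1 | h1
    · right
      rw [YoungDiagram.mem_iff_lt_rowLen]
      exact lt_of_lt_of_le h1 (Y.rowLen_anti _ _ (by omega))
    · rcases Nat.lt_or_ge q1 i with h2 | h2
      · right
        rw [YoungDiagram.mem_iff_lt_rowLen]
        have := h q1 h2
        omega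
      · left
        rw [Prod.mk.injEq]
        omega
  · right
    have hmem : (p1, p2) ∈ Y := hp
    exact Y.isLowerSet hle hmem

noncomputable def addBox (Y : YoungDiagram) (i : ℕ) : YoungDiagram :=
  if h : addable Y i then ⟨insert (i, Y.rowLen i) Y.cells, addable_lowerSet h⟩ else Y

lemma cells_addBox {Y : YoungDiagram} {i : ℕ} (h : addable Y i) :
    (addBox Y i).cells = insert (i, Y.rowLen i) Y.cells := by
  unfold addBox; rw [dif_pos h]

lemma mem_addBox {Y : YoungDiagram} {i : ℕ} (h : addable Y i) (c : ℕ × ℕ) :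
    c ∈ addBox Y i ↔ c = (i, Y.rowLen i) ∨ c ∈ Y := by
  rw [← YoungDiagram.mem_cells, cells_addBox h]
  simp [YoungDiagram.mem_cells]

lemma card_addBox {Y : YoungDiagram} {i : ℕ} (h : addable Y i) :
    (addBox Y i).cells.card = Y.cells.card + 1 := by
  rw [cells_addBox h,
    Finset.card_insert_of_notMem (by rw [YoungDiagram.mem_cells]; exact not_mem_self_rowLen Y i)]

lemma rowLen_addBox_self {Y : YoungDiagram} {i : ℕ} (h : addable Y i) :
    (addBox Y i).rowLen i = Y.rowLen i + 1 := by
  apply rowLen_eq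
  · intro j hj
    rw [mem_addBox h]
    rcases Nat.lt_or_ge j (Y.rowLen i) with h1 | h1
    · right; exact YoungDiagram.mem_iff_lt_rowLen.mpr h1
    · left; rw [Prod.mk.injEq]; omega
  · rw [mem_addBox h]
    rintro (h1 | h1)
    · obtain ⟨-, h2⟩ : i = i ∧ Y.rowLen i + 1 = Y.rowLen i := Prod.mk.injEq .. ▸ h1
      omega
    · rw [YoungDiagram.mem_iff_lt_rowLen] at h1; omega

lemma rowLen_addBox_ne {Y : YoungDiagram} {i : ℕ} (h : addable Y i) {r : ℕ} (hr : r ≠ i) :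
    (addBox Y i).rowLen r = Y.rowLen r := by
  apply rowLen_eq
  · intro j hj
    rw [mem_addBox h]
    right; exact YoungDiagram.mem_iff_lt_rowLen.mpr hj
  · rw [mem_addBox h]
    rintro (h1 | h1)
    · obtain ⟨h2, -⟩ : r = i ∧ Y.rowLen r = Y.rowLen i := Prod.mk.injEq .. ▸ h1
      exact hr h2
    · exact not_mem_self_rowLen Y r h1

lemma addable_colLen_rowLen' {Y : YoungDiagram} {i : ℕ} (h : addable Y i) :
    Y.colLen (Y.rowLen i) = i := by
  apply colLen_eq
  · intro r hr
    exact YoungDiagram.mem_iff_lt_rowLen.mpr (h r hr)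
  · exact not_mem_self_rowLen Y i

lemma colLen_addBox_self {Y : YoungDiagram} {i : ℕ} (h : addable Y i) :
    (addBox Y i).colLen (Y.rowLen i) = i + 1 := by
  apply colLen_eq
  · intro r hr
    rw [mem_addBox h]
    rcases Nat.lt_or_ge r i with h1 | h1
    · right; exact YoungDiagram.mem_iff_lt_rowLen.mpr (h r h1)
    · left; rw [Prod.mk.injEq]; omega
  · rw [mem_addBox h]
    rintro (h1 | h1)
    · obtain ⟨h2, -⟩ : i + 1 = i ∧ Y.rowLen i = Y.rowLen i := Prod.mk.injEq .. ▸ h1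
      omega
    · rw [YoungDiagram.mem_iff_lt_colLen] at h1
      have := addable_colLen_rowLen' h
      omega

lemma colLen_addBox_ne {Y : YoungDiagram} {i : ℕ} (h : addable Y i) {j : ℕ}
    (hj : j ≠ Y.rowLen i) : (addBox Y i).colLen j = Y.colLen j := by
  apply colLen_eq
  · intro r hr
    rw [mem_addBox h]
    right; exact YoungDiagram.mem_iff_lt_colLen.mpr hr
  · rw [mem_addBox h]
    rintro (h1 | h1)
    · obtain ⟨-, h2⟩ : Y.colLen j = i ∧ j = Y.rowLen i := Prod.mk.injEq .. ▸ h1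
      exact hj h2
    · rw [YoungDiagram.mem_iff_lt_colLen] at h1
      have := addable_colLen_rowLen' h
      omega

def removable (Y : YoungDiagram) (i : ℕ) : Prop := Y.rowLen (i + 1) < Y.rowLen i

lemma removable_addBox {Y : YoungDiagram} {i : ℕ} (h : addable Y i) :
    removable (addBox Y i) i := by
  have h1 := rowLen_addBox_self h
  have h2 := rowLen_addBox_ne h (show i + 1 ≠ i by omega)
  have h3 := Y.rowLen_anti i (i + 1) (Nat.le_succ i)
  unfold removable
  omega

lemma addable_colLen_rowLen {Y : YoungDiagram} {i : ℕ} (h : addable Y i) :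
    Y.colLen (Y.rowLen i) = i := by
  apply colLen_eq
  · intro r hr
    exact YoungDiagram.mem_iff_lt_rowLen.mpr (h r hr)
  · exact not_mem_self_rowLen Y i

lemma exists_addBox {μ : YoungDiagram} {i : ℕ} (h : removable μ i) :
    ∃ Y : YoungDiagram, addable Y i ∧ addBox Y i = μ := by
  have hpos : 0 < μ.rowLen i := by unfold removable at h; omega
  have hlower : IsLowerSet (↑(μ.cells.erase (i, μ.rowLen i - 1)) : Set (ℕ × ℕ)) := by
    intro p q hle hp
    obtain ⟨q1, q2⟩ := q
    obtain ⟨p1, p2⟩ := p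
    obtain ⟨hx, hy⟩ : q1 ≤ p1 ∧ q2 ≤ p2 := Prod.mk_le_mk.mp hle
    simp only [coe_erase, Set.mem_diff, mem_coe, YoungDiagram.mem_cells,
      Set.mem_singleton_iff] at hp ⊢
    refine ⟨μ.isLowerSet hle hp.1, ?_⟩
    intro hc
    obtain ⟨he1, he2⟩ : q1 = i ∧ q2 = μ.rowLen i - 1 := Prod.mk.injEq .. ▸ hc
    have hbmem := YoungDiagram.mem_iff_lt_rowLen.mp hp.1
    have hble : μ.rowLen p1 ≤ μ.rowLen i := μ.rowLen_anti i p1 (by omega)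
    apply hp.2
    rw [Prod.mk.injEq]
    rcases Nat.lt_or_ge i p1 with h2 | h2
    · have := μ.rowLen_anti (i + 1) p1 (by omega)
      unfold removable at h
      omega
    · omega
  set lam : YoungDiagram := ⟨μ.cells.erase (i, μ.rowLen i - 1), hlower⟩ with hlam
  have hrl : lam.rowLen i = μ.rowLen i - 1 := by
    apply rowLen_eq
    · intro j hj
      show (i, j) ∈ μ.cells.erase _
      rw [Finset.mem_erase]
      constructor
      · simp only [ne_eq, Prod.mk.injEq, not_and]; omega
      · rw [YoungDiagram.mem_cells, YoungDiagram.mem_iff_lt_rowLen]; omega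
    · show (i, μ.rowLen i - 1) ∈ μ.cells.erase _ → False
      rw [Finset.mem_erase]
      rintro ⟨hne, -⟩
      exact hne rfl
  have hrlne : ∀ r, r ≠ i → lam.rowLen r = μ.rowLen r := by
    intro r hr
    apply rowLen_eq
    · intro j hj
      show (r, j) ∈ μ.cells.erase _
      rw [Finset.mem_erase]
      refine ⟨?_, by rw [YoungDiagram.mem_cells, YoungDiagram.mem_iff_lt_rowLen]; omega⟩
      simp only [ne_eq, Prod.mk.injEq, not_and]
      intro hcon
      exact absurd hcon hr
    · show (r, μ.rowLen r) ∈ μ.cells.erase _ → False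
      rw [Finset.mem_erase]
      rintro ⟨-, hmem⟩
      rw [YoungDiagram.mem_cells] at hmem
      exact not_mem_self_rowLen μ r hmem
  have hadd : addable lam i := by
    intro r hr
    rw [hrl, hrlne r (by omega)]
    have := μ.rowLen_anti r i (by omega)
    omega
  refine ⟨lam, hadd, ?_⟩
  apply YoungDiagram.ext
  rw [cells_addBox hadd]
  show insert (i, lam.rowLen i) (μ.cells.erase (i, μ.rowLen i - 1)) = μ.cells
  rw [hrl, Finset.insert_erase]
  rw [YoungDiagram.mem_cells, YoungDiagram.mem_iff_lt_rowLen]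
  omega

lemma addBox_injective {Y Y' : YoungDiagram} {i : ℕ} (h : addable Y i) (h' : addable Y' i)
    (heq : addBox Y i = addBox Y' i) : Y = Y' := by
  apply YoungDiagram.ext
  have hr : Y.rowLen i = Y'.rowLen i := by
    have h1 := congrArg (fun μ : YoungDiagram => μ.rowLen i) heq
    simp only [rowLen_addBox_self h, rowLen_addBox_self h'] at h1
    omega
  have hc : insert (i, Y.rowLen i) Y.cells = insert (i, Y.rowLen i) Y'.cells := by
    have := congrArg YoungDiagram.cells heq
    rw [cells_addBox h, cells_addBox h'] at this
    rwa [← hr] at this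
  have e1 : Y.cells = (insert (i, Y.rowLen i) Y.cells).erase (i, Y.rowLen i) := by
    rw [Finset.erase_insert (by rw [YoungDiagram.mem_cells]; exact not_mem_self_rowLen Y i)]
  have e2 : Y'.cells = (insert (i, Y.rowLen i) Y'.cells).erase (i, Y.rowLen i) := by
    rw [hr, Finset.erase_insert (by rw [YoungDiagram.mem_cells]; exact not_mem_self_rowLen Y' i)]
  rw [e1, e2, hc]



/-- integer hook length -/
def hzz (Y : YoungDiagram) (i j : ℕ) : ℤ := (Y.rowLen i : ℤ) - j + Y.colLen j - i - 1

/-- integer beta number (w.r.t. N rows) -/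
def bzz (Y : YoungDiagram) (N r : ℕ) : ℤ := (Y.rowLen r : ℤ) + N - 1 - r

lemma cell_iff (Y : YoungDiagram) (r j : ℕ) : j < Y.rowLen r ↔ r < Y.colLen j := by
  rw [← YoungDiagram.mem_iff_lt_rowLen, ← YoungDiagram.mem_iff_lt_colLen]

lemma row_hook_union (Y : YoungDiagram) {N i : ℕ} (hcol : Y.colLen 0 ≤ N) (hi : i < N)
    (f : ℤ → ℚ) :
    (∏ j ∈ range (Y.rowLen i), f (hzz Y i j)) *
      (∏ r ∈ Ioo i N, f (bzz Y N i - bzz Y N r)) = ∏ m ∈ Icc (1 : ℤ) (bzz Y N i), f m := by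
  classical
  set b := bzz Y N i with hb
  -- injectivity on rows
  have hmono : ∀ j j', j < j' → j' < Y.rowLen i → hzz Y i j' < hzz Y i j := by
    intro j j' hjj hj'
    have h1 : Y.colLen j' ≤ Y.colLen j := Y.colLen_anti j j' (by omega)
    unfold hzz
    push_cast
    omega
  have hinj1 : Set.InjOn (hzz Y i) (range (Y.rowLen i)) := by
    intro a ha c hc hac
    simp only [coe_range, Set.mem_Iio] at ha hc
    rcases lt_trichotomy a c with h | h | h
    · exact absurd hac (ne_of_gt (hmono a c h hc))
    · exact h
    · exact absurd hac (ne_of_lt (hmono c a h ha))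
  have hmono2 : ∀ r r' : ℕ, r < r' → bzz Y N r' < bzz Y N r := by
    intro r r' hrr
    have h1 : Y.rowLen r' ≤ Y.rowLen r := Y.rowLen_anti r r' (by omega)
    unfold bzz
    push_cast
    omega
  have hinj2 : Set.InjOn (fun r => b - bzz Y N r) (Ioo i N) := by
    intro a ha c hc hac
    simp only [coe_Ioo, Set.mem_Ioo] at ha hc
    simp only [sub_right_inj] at hac
    rcases lt_trichotomy a c with h | h | h
    · exact absurd hac (ne_of_gt (hmono2 a c h))
    · exact h
    · exact absurd hac (ne_of_lt (hmono2 c a h))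
  set F1 := (range (Y.rowLen i)).image (hzz Y i) with hF1
  set F2 := (Ioo i N).image (fun r => b - bzz Y N r) with hF2
  -- bounds
  have hbound1 : ∀ j < Y.rowLen i, hzz Y i j ∈ Icc (1 : ℤ) b := by
    intro j hj
    have hc1 : i < Y.colLen j := (cell_iff Y i j).mp hj
    have hc2 : Y.colLen j ≤ Y.colLen 0 := Y.colLen_anti 0 j (Nat.zero_le j)
    simp only [mem_Icc]
    unfold hzz bzz at *
    push_cast
    omega
  have hbound2 : ∀ r, i < r → r < N → b - bzz Y N r ∈ Icc (1 : ℤ) b := by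
    intro r h1 h2
    have h3 : Y.rowLen r ≤ Y.rowLen i := Y.rowLen_anti i r (by omega)
    simp only [mem_Icc]
    unfold bzz at *
    push_cast
    omega
  -- disjointness
  have hne : ∀ j < Y.rowLen i, ∀ r, i < r → r < N → hzz Y i j ≠ b - bzz Y N r := by
    intro j hj r h1 h2
    have e1 : j < Y.rowLen r ↔ r < Y.colLen j := cell_iff Y r j
    unfold hzz bzz at *
    push_cast
    omega
  have hdisj : Disjoint F1 F2 := by
    rw [Finset.disjoint_left]
    intro x hx1 hx2
    simp only [hF1, hF2, mem_image, mem_range, mem_Ioo] at hx1 hx2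
    obtain ⟨j, hj, rfl⟩ := hx1
    obtain ⟨r, ⟨hr1, hr2⟩, hr3⟩ := hx2
    exact hne j hj r hr1 hr2 hr3.symm
  -- cardinality
  have hcard1 : F1.card = Y.rowLen i := by
    rw [hF1, Finset.card_image_of_injOn hinj1, card_range]
  have hcard2 : F2.card = N - i - 1 := by
    rw [hF2, Finset.card_image_of_injOn hinj2, Nat.card_Ioo]
  have hsub : F1 ∪ F2 ⊆ Icc (1 : ℤ) b := by
    intro x hx
    rcases Finset.mem_union.mp hx with hx | hx
    · simp only [hF1, mem_image, mem_range] at hx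
      obtain ⟨j, hj, rfl⟩ := hx
      exact hbound1 j hj
    · simp only [hF2, mem_image, mem_Ioo] at hx
      obtain ⟨r, ⟨hr1, hr2⟩, rfl⟩ := hx
      exact hbound2 r hr1 hr2
  have hbnn : b = (Y.rowLen i : ℤ) + (N - 1 - i : ℕ) := by
    unfold b
    unfold bzz
    push_cast
    omega
  have hcardIcc : (Icc (1 : ℤ) b).card = Y.rowLen i + (N - i - 1) := by
    rw [Int.card_Icc]
    rw [hbnn]
    push_cast
    omega
  have hequ : F1 ∪ F2 = Icc (1 : ℤ) b := by
    apply Finset.eq_of_subset_of_card_le hsub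
    rw [hcardIcc, Finset.card_union_of_disjoint hdisj, hcard1, hcard2]
  rw [← hequ, Finset.prod_union hdisj, Finset.prod_image hinj1, Finset.prod_image hinj2]

noncomputable def bq (Y : YoungDiagram) (N r : ℕ) : ℚ := (Y.rowLen r : ℚ) + N - 1 - r

lemma bq_cast (Y : YoungDiagram) (N r : ℕ) : bq Y N r = ((bzz Y N r : ℤ) : ℚ) := by
  unfold bq bzz; push_cast; ring

lemma hookQ_cast (Y : YoungDiagram) (i j : ℕ) : hookQ Y i j = ((hzz Y i j : ℤ) : ℚ) := by
  unfold hookQ hzz; push_cast; ring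

lemma erase_range_split {i N : ℕ} (hi : i < N) :
    (range N).erase i = range i ∪ Ioo i N := by
  ext x
  simp only [mem_erase, mem_range, mem_union, mem_Ioo]
  omega

lemma prod_Icc_shift (b : ℤ) (hb : 0 ≤ b) :
    ∏ m ∈ Icc (1 : ℤ) b, ((m : ℚ) + 1) = ((b : ℚ) + 1) * ∏ m ∈ Icc (1 : ℤ) b, (m : ℚ) := by
  have himg : (Icc (1 : ℤ) b).image (· + 1) = Icc 2 (b + 1) := by
    ext x
    simp only [mem_image, mem_Icc]
    constructor
    · rintro ⟨y, hy, rfl⟩; omega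
    · intro hx; exact ⟨x - 1, by omega, by omega⟩
  have h1 : ∏ m ∈ Icc (1 : ℤ) b, ((m : ℚ) + 1) = ∏ m ∈ Icc (2 : ℤ) (b + 1), (m : ℚ) := by
    rw [← himg, Finset.prod_image (by intro a _ c _ h; have h' : a + 1 = c + 1 := h; omega)]
    push_cast
    rfl
  have h2 : Icc (1 : ℤ) (b + 1) = insert 1 (Icc 2 (b + 1)) := by
    ext x; simp only [mem_insert, mem_Icc]; omega
  have h3 : Icc (1 : ℤ) (b + 1) = insert (b + 1) (Icc 1 b) := by
    ext x; simp only [mem_insert, mem_Icc]; omega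
  have h4 : ∏ m ∈ Icc (1 : ℤ) (b + 1), (m : ℚ) = ∏ m ∈ Icc (2 : ℤ) (b + 1), (m : ℚ) := by
    rw [h2, Finset.prod_insert (by simp)]
    norm_num
  have h5 : ∏ m ∈ Icc (1 : ℤ) (b + 1), (m : ℚ) = ((b : ℚ) + 1) * ∏ m ∈ Icc (1 : ℤ) b, (m : ℚ) := by
    rw [h3, Finset.prod_insert (by simp only [mem_Icc]; omega)]
    push_cast
    ring
  rw [h1, ← h4, h5]

lemma hook_ratio {Y : YoungDiagram} {i N : ℕ} (hadd : addable Y i) (hi : i < N)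
    (hcol : Y.colLen 0 ≤ N) (hcolm : (addBox Y i).colLen 0 ≤ N) :
    Hk (addBox Y i) * (∏ r ∈ (range N).erase i, (bq Y N i + 1 - bq Y N r)) =
      Hk Y * (bq Y N i + 1) * ∏ r ∈ (range N).erase i, (bq Y N i - bq Y N r) := by
  classical
  set μ := addBox Y i with hμ
  set L := Y.rowLen i with hL
  -- basic facts
  have hrs : μ.rowLen i = L + 1 := rowLen_addBox_self hadd
  have hrne : ∀ r, r ≠ i → μ.rowLen r = Y.rowLen r := fun r hr => rowLen_addBox_ne hadd hr
  have hcs : μ.colLen L = i + 1 := colLen_addBox_self hadd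
  have hcne : ∀ j, j ≠ L → μ.colLen j = Y.colLen j := fun j hj => colLen_addBox_ne hadd hj
  have hcY : Y.colLen L = i := addable_colLen_rowLen hadd
  -- hook equalities
  have hook_row_i : ∀ j < L, hookQ μ i j = hookQ Y i j + 1 := by
    intro j hj
    unfold hookQ
    rw [hrs, hcne j (by omega)]
    push_cast
    ring
  have hook_new : hookQ μ i L = 1 := by
    unfold hookQ
    rw [hrs, hcs]
    push_cast
    ring
  have hook_other : ∀ r j, r ≠ i → j ≠ L → hookQ μ r j = hookQ Y r j := by
    intro r j h1 h2
    unfold hookQ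
    rw [hrne r h1, hcne j h2]
  have hook_col : ∀ r, r ≠ i → hookQ μ r L = hookQ Y r L + 1 := by
    intro r h1
    unfold hookQ
    rw [hrne r h1, hcs, hcY]
    push_cast
    ring
  -- row products
  have hprod_mu : Hk μ = ∏ r ∈ range N, ∏ j ∈ range (μ.rowLen r), hookQ μ r j := by
    unfold Hk
    exact prod_cells μ hcolm _
  have hprod_Y : Hk Y = ∏ r ∈ range N, ∏ j ∈ range (Y.rowLen r), hookQ Y r j := by
    unfold Hk
    exact prod_cells Y hcol _
  set RowM : ℕ → ℚ := fun r => ∏ j ∈ range (μ.rowLen r), hookQ μ r j with hRowM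
  set RowY : ℕ → ℚ := fun r => ∏ j ∈ range (Y.rowLen r), hookQ Y r j with hRowY
  -- row i of mu
  have hrowi : RowM i = ∏ j ∈ range L, (hookQ Y i j + 1) := by
    rw [hRowM]
    simp only
    rw [hrs, Finset.prod_range_succ, hook_new, mul_one]
    exact Finset.prod_congr rfl fun j hj => hook_row_i j (mem_range.mp hj)
  -- rows r > i unchanged
  have hrowgt : ∀ r, i < r → RowM r = RowY r := by
    intro r hr
    rw [hRowM, hRowY]
    simp only
    rw [hrne r (by omega)]
    refine Finset.prod_congr rfl fun j hj => ?_
    have h1 : Y.rowLen r ≤ L := hL ▸ Y.rowLen_anti i r (by omega)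
    exact hook_other r j (by omega) (by have := mem_range.mp hj; omega)
  -- rows r < i
  have hrowlt : ∀ r, r < i → RowM r * hookQ Y r L = RowY r * (hookQ Y r L + 1) := by
    intro r hr
    have hLlt : L < Y.rowLen r := hadd r hr
    have hmemL : L ∈ range (Y.rowLen r) := mem_range.mpr hLlt
    rw [hRowM, hRowY]
    simp only
    rw [hrne r (by omega)]
    rw [← Finset.mul_prod_erase _ _ hmemL, ← Finset.mul_prod_erase _ (fun j => hookQ Y r j) hmemL]
    have hcongr : ∏ j ∈ (range (Y.rowLen r)).erase L, hookQ μ r j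
        = ∏ j ∈ (range (Y.rowLen r)).erase L, hookQ Y r j := by
      refine Finset.prod_congr rfl fun j hj => ?_
      exact hook_other r j (by omega) (Finset.mem_erase.mp hj).1
    rw [hcongr, hook_col r (by omega)]
    ring
  -- split products
  have hsplit : ∀ g : ℕ → ℚ, ∏ r ∈ (range N).erase i, g r =
      (∏ r ∈ range i, g r) * ∏ r ∈ Ioo i N, g r := by
    intro g
    rw [erase_range_split hi, Finset.prod_union]
    rw [Finset.disjoint_left]
    intro x hx1 hx2
    simp only [mem_range] at hx1
    simp only [mem_Ioo] at hx2
    omega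
  have hHkmu : Hk μ = RowM i * ∏ r ∈ (range N).erase i, RowM r := by
    rw [hprod_mu, ← Finset.mul_prod_erase _ _ (mem_range.mpr hi)]
  have hHkY : Hk Y = RowY i * ∏ r ∈ (range N).erase i, RowY r := by
    rw [hprod_Y, ← Finset.mul_prod_erase _ _ (mem_range.mpr hi)]
  -- column hooks in terms of bq
  have hcolhook : ∀ r, r < i → hookQ Y r L = bq Y N r - bq Y N i - 1 := by
    intro r hr
    unfold hookQ bq
    rw [hcY, hL]
    push_cast
    ring
  -- the two row-hook identities
  have hE1 : RowY i * (∏ r ∈ Ioo i N, (bq Y N i - bq Y N r))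
      = ∏ m ∈ Icc (1 : ℤ) (bzz Y N i), (m : ℚ) := by
    have := row_hook_union Y hcol hi (fun m => (m : ℚ))
    rw [hRowY]
    simp only
    rw [← this]
    congr 1
    · exact Finset.prod_congr rfl fun j _ => hookQ_cast Y i j
    · refine Finset.prod_congr rfl fun r _ => ?_
      simp only [bq_cast]
      push_cast
      ring
  have hE2 : (∏ j ∈ range L, (hookQ Y i j + 1)) * (∏ r ∈ Ioo i N, (bq Y N i - bq Y N r + 1))
      = (bq Y N i + 1) * ∏ m ∈ Icc (1 : ℤ) (bzz Y N i), (m : ℚ) := by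
    have := row_hook_union Y hcol hi (fun m => (m : ℚ) + 1)
    have hb0 : (0 : ℤ) ≤ bzz Y N i := by
      unfold bzz; omega
    rw [bq_cast, ← prod_Icc_shift _ hb0, ← this]
    congr 1
    · exact Finset.prod_congr rfl fun j _ => by rw [hookQ_cast]
    · refine Finset.prod_congr rfl fun r _ => ?_
      simp only [bq_cast]
      push_cast
      ring
  -- final algebra
  set c := bq Y N with hc
  set A := ∏ r ∈ range i, RowM r with hA
  set B := ∏ r ∈ range i, RowY r with hB
  set U := ∏ r ∈ range i, (c i + 1 - c r) with hU
  set V := ∏ r ∈ range i, (c i - c r) with hV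
  set D := ∏ r ∈ Ioo i N, (c i - c r) with hD
  set D1 := ∏ r ∈ Ioo i N, (c i - c r + 1) with hD1
  set RY := ∏ r ∈ Ioo i N, RowY r with hRY
  set P := ∏ m ∈ Icc (1 : ℤ) (bzz Y N i), (m : ℚ) with hP
  set Pp := ∏ j ∈ range L, (hookQ Y i j + 1) with hPp
  have hAU : A * U = B * V := by
    have h1 : ∏ r ∈ range i, (RowM r * hookQ Y r L) =
        ∏ r ∈ range i, (RowY r * (hookQ Y r L + 1)) :=
      Finset.prod_congr rfl fun r hr => hrowlt r (mem_range.mp hr)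
    rw [Finset.prod_mul_distrib, Finset.prod_mul_distrib] at h1
    have hpow : ((-1 : ℚ)) ^ i = ∏ _r ∈ range i, (-1 : ℚ) := by
      rw [Finset.prod_const, card_range]
    have h2 : ∏ r ∈ range i, hookQ Y r L = (-1 : ℚ) ^ i * U := by
      rw [hU, hpow, ← Finset.prod_mul_distrib]
      refine Finset.prod_congr rfl fun r hr => ?_
      rw [hcolhook r (mem_range.mp hr)]
      ring
    have h3 : ∏ r ∈ range i, (hookQ Y r L + 1) = (-1 : ℚ) ^ i * V := by
      rw [hV, hpow, ← Finset.prod_mul_distrib]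
      refine Finset.prod_congr rfl fun r hr => ?_
      rw [hcolhook r (mem_range.mp hr)]
      ring
    rw [h2, h3] at h1
    have hne : ((-1 : ℚ) ^ i) ≠ 0 := by
      apply pow_ne_zero; norm_num
    exact mul_left_cancel₀ hne (by linear_combination h1)
  have hMsplit : ∏ r ∈ (range N).erase i, RowM r = A * ∏ r ∈ Ioo i N, RowM r := hsplit RowM
  have hMgt : ∏ r ∈ Ioo i N, RowM r = RY :=
    Finset.prod_congr rfl fun r hr => hrowgt r (mem_Ioo.mp hr).1
  have hYsplit : ∏ r ∈ (range N).erase i, RowY r = B * RY := hsplit RowY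
  have hHm : Hk μ = Pp * (A * RY) := by
    rw [hHkmu, hMsplit, hMgt, hrowi]
  have hHY : Hk Y = RowY i * (B * RY) := by
    rw [hHkY, hYsplit]
  have hUsplit : ∏ r ∈ (range N).erase i, (c i + 1 - c r) = U * D1 := by
    have := hsplit (fun r => c i + 1 - c r)
    rw [this]
    congr 1
    refine Finset.prod_congr rfl fun r _ => by ring
  have hVsplit : ∏ r ∈ (range N).erase i, (c i - c r) = V * D := hsplit _
  rw [hHm, hHY, hUsplit, hVsplit]
  -- target : Pp * (A * RY) * (U * D1) = RowY i * (B * RY) * (c i + 1) * (V * D)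
  linear_combination (D1 * RY * Pp) * hAU + (B * V * RY) * hE2 - ((c i + 1) * B * V * RY) * hE1


lemma nodal_coeff_top (v : ℕ → ℚ) (N : ℕ) :
    (∏ i ∈ range N, (X - C (v i))).coeff N = 1 := by
  have hm : (∏ i ∈ range N, (X - C (v i))).Monic :=
    monic_prod_of_monic _ _ fun i _ => monic_X_sub_C (v i)
  have hd : (∏ i ∈ range N, (X - C (v i))).natDegree = N := by
    rw [natDegree_prod_of_monic _ _ fun i _ => monic_X_sub_C (v i)]
    simp [natDegree_X_sub_C]
  have := hm.coeff_natDegree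
  rwa [hd] at this

lemma coeff_mul_linear (p : ℚ[X]) (a : ℚ) (k : ℕ) :
    (p * (X - C a)).coeff (k + 1) = p.coeff k - a * p.coeff (k + 1) := by
  rw [mul_sub, mul_comm p X, coeff_sub, coeff_X_mul, mul_comm p (C a), coeff_C_mul]

lemma nodal_coeff_one (v : ℕ → ℚ) (N : ℕ) :
    (∏ i ∈ range (N + 1), (X - C (v i))).coeff N = -∑ i ∈ range (N + 1), v i := by
  induction N with
  | zero => simp
  | succ n ih =>
    rw [Finset.prod_range_succ, coeff_mul_linear, ih, nodal_coeff_top]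
    conv_rhs => rw [Finset.sum_range_succ]
    ring

lemma nodal_coeff_two (v : ℕ → ℚ) (N : ℕ) :
    (∏ i ∈ range (N + 2), (X - C (v i))).coeff N =
      ((∑ i ∈ range (N + 2), v i) ^ 2 - ∑ i ∈ range (N + 2), (v i) ^ 2) / 2 := by
  induction N with
  | zero =>
    rw [Finset.prod_range_succ, Finset.prod_range_one, mul_coeff_zero]
    simp [Finset.sum_range_succ]
    ring
  | succ n ih =>
    rw [show n + 1 + 2 = (n + 2) + 1 by ring, Finset.prod_range_succ, coeff_mul_linear, ih,
      nodal_coeff_one]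
    conv_rhs => rw [Finset.sum_range_succ (f := v), Finset.sum_range_succ (f := fun i => v i ^ 2)]
    ring

lemma leadingCoeff_basisDivisor (x y : ℚ) :
    (Lagrange.basisDivisor x y).leadingCoeff = (x - y)⁻¹ := by
  unfold Lagrange.basisDivisor
  rw [leadingCoeff_mul, leadingCoeff_C, (monic_X_sub_C y).leadingCoeff, mul_one]

lemma coeff_basis {ι : Type*} [DecidableEq ι] {s : Finset ι} {v : ι → ℚ}
    (hvs : Set.InjOn v s) {i : ι} (hi : i ∈ s) :
    (Lagrange.basis s v i).coeff (s.card - 1) = ∏ j ∈ s.erase i, (v i - v j)⁻¹ := by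
  have hnd := Lagrange.natDegree_basis hvs hi
  rw [← hnd, coeff_natDegree]
  unfold Lagrange.basis
  rw [leadingCoeff_prod]
  exact Finset.prod_congr rfl fun j _ => leadingCoeff_basisDivisor _ _

lemma lagrange_sum {ι : Type*} [DecidableEq ι] {s : Finset ι} {v : ι → ℚ}
    (hvs : Set.InjOn v s) (A : ℚ[X]) (hdeg : A.degree < s.card) :
    ∑ i ∈ s, A.eval (v i) * ∏ j ∈ s.erase i, (v i - v j)⁻¹ = A.coeff (s.card - 1) := by
  have hA := Lagrange.eq_interpolate hvs hdeg
  conv_rhs => rw [hA]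
  rw [Lagrange.interpolate_apply, finset_sum_coeff]
  refine (Finset.sum_congr rfl fun i hi => ?_).symm
  rw [coeff_C_mul, coeff_basis hvs hi]

lemma nodal_natDegree (v : ℕ → ℚ) (N : ℕ) :
    (∏ i ∈ range N, (X - C (v i))).natDegree = N := by
  rw [natDegree_prod_of_monic _ _ fun i _ => monic_X_sub_C (v i)]
  simp [natDegree_X_sub_C]

lemma nodal_coeff_zero_of_gt (v : ℕ → ℚ) {N m : ℕ} (h : N < m) :
    (∏ i ∈ range N, (X - C (v i))).coeff m = 0 :=
  coeff_eq_zero_of_natDegree_lt (by rw [nodal_natDegree]; omega)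

lemma nodal_eval (v : ℕ → ℚ) (N : ℕ) (t : ℚ) :
    (∏ i ∈ range N, (X - C (v i))).eval t = ∏ i ∈ range N, (t - v i) := by
  rw [eval_prod]
  exact Finset.prod_congr rfl fun i _ => by simp

lemma nodal_eval_self (v : ℕ → ℚ) {N i : ℕ} (hi : i ∈ range N) :
    (∏ j ∈ range N, (X - C (v j))).eval (v i) = 0 := by
  rw [nodal_eval]
  exact Finset.prod_eq_zero hi (by ring)

section identities

variable {K : ℕ} {c : ℕ → ℚ}

/-- Identity (I): the branching-weight sum. -/
lemma sum_removal (hinj : Set.InjOn c (range (K + 2))) :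
    ∑ i ∈ range (K + 2), (-(c i) * ∏ j ∈ range (K + 2), (c i - 1 - c j)) *
        (∏ j ∈ (range (K + 2)).erase i, (c i - c j)⁻¹)
      = (∑ i ∈ range (K + 2), c i) - (K + 2) * (K + 1) / 2 := by
  set S1 : ℚ := ∑ i ∈ range (K + 2), c i with hS1
  set S2 : ℚ := ∑ i ∈ range (K + 2), (c i) ^ 2 with hS2
  set Q : ℚ[X] := ∏ j ∈ range (K + 2), (X - C (c j)) with hQ
  set Q1 : ℚ[X] := ∏ j ∈ range (K + 2), (X - C (c j + 1)) with hQ1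
  set A : ℚ[X] := X * Q1 - (X - C ((K : ℚ) + 2)) * Q with hA
  have hadd : K + 1 + 1 = K + 2 := by omega
  have hS1' : ∑ j ∈ range (K + 2), (c j + 1) = S1 + (K + 2) := by
    rw [Finset.sum_add_distrib, Finset.sum_const, card_range, hS1]
    push_cast; ring
  have hS2' : ∑ j ∈ range (K + 2), (c j + 1) ^ 2 = S2 + 2 * S1 + (K + 2) := by
    have h0 : ∀ j ∈ range (K + 2), (c j + 1) ^ 2 = (c j) ^ 2 + (2 * c j + 1) :=
      fun j _ => by ring
    rw [Finset.sum_congr rfl h0, Finset.sum_add_distrib, Finset.sum_add_distrib,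
      Finset.sum_const, card_range, ← Finset.mul_sum, hS1, hS2]
    push_cast; ring
  -- coefficients of Q and Q1
  have hQtop : Q.coeff (K + 2) = 1 := by
    have := nodal_coeff_top c (K + 2); rwa [← hQ] at this
  have hQ1top : Q1.coeff (K + 2) = 1 := by
    have := nodal_coeff_top (fun j => c j + 1) (K + 2); rwa [← hQ1] at this
  have hQone : Q.coeff (K + 1) = -S1 := by
    have := nodal_coeff_one c (K + 1); rw [hadd] at this; rwa [← hQ, ← hS1] at this
  have hQ1one : Q1.coeff (K + 1) = -(S1 + (K + 2)) := by
    have := nodal_coeff_one (fun j => c j + 1) (K + 1); rw [hadd] at this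
    rwa [← hQ1, hS1'] at this
  have hQtwo : Q.coeff K = (S1 ^ 2 - S2) / 2 := by
    have := nodal_coeff_two c K; rwa [← hQ, ← hS1, ← hS2] at this
  have hQ1two : Q1.coeff K = ((S1 + (K + 2)) ^ 2 - (S2 + 2 * S1 + (K + 2))) / 2 := by
    have := nodal_coeff_two (fun j => c j + 1) K; rwa [← hQ1, hS1', hS2'] at this
  have hQhigh : ∀ m, K + 2 < m → Q.coeff m = 0 := by
    intro m hm; rw [hQ]; exact nodal_coeff_zero_of_gt _ hm
  have hQ1high : ∀ m, K + 2 < m → Q1.coeff m = 0 := by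
    intro m hm; rw [hQ1]; exact nodal_coeff_zero_of_gt _ hm
  have hcoeffA : ∀ k : ℕ, A.coeff (k + 1)
      = Q1.coeff k - (Q.coeff k - ((K : ℚ) + 2) * Q.coeff (k + 1)) := by
    intro k
    rw [hA, coeff_sub, coeff_X_mul, mul_comm (X - C ((K : ℚ) + 2)) Q, coeff_mul_linear]
  have hdeg : A.degree < ((range (K + 2)).card : ℕ) := by
    rw [card_range, Polynomial.degree_lt_iff_coeff_zero]
    intro m hm
    have hm' : K + 2 ≤ m := by exact_mod_cast hm
    obtain ⟨k, rfl⟩ : ∃ k, m = k + 1 := ⟨m - 1, by omega⟩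
    rw [hcoeffA k]
    rcases Nat.lt_trichotomy k (K + 2) with hk | hk | hk
    · have hk1 : k = K + 1 := by omega
      subst hk1
      rw [hQ1one, hQone, hQtop]
      ring
    · subst hk
      rw [hQ1top, hQtop, hQhigh _ (by omega)]
      ring
    · rw [hQ1high _ hk, hQhigh _ hk, hQhigh _ (by omega)]
      ring
  have hsum := lagrange_sum hinj A hdeg
  have hvals : ∀ i ∈ range (K + 2), A.eval (c i)
      = c i * ∏ j ∈ range (K + 2), (c i - 1 - c j) := by
    intro i hi
    rw [hA, eval_sub, eval_mul, eval_mul, eval_X, eval_sub, eval_X, eval_C, hQ,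
      nodal_eval_self _ hi, hQ1, nodal_eval]
    rw [mul_zero, sub_zero]
    congr 1
    exact Finset.prod_congr rfl fun j _ => by ring
  have hcoeff : A.coeff (K + 1) = -S1 + (K + 2) * (K + 1) / 2 := by
    rw [hcoeffA K, hQ1two, hQtwo, hQone]
    push_cast
    ring
  rw [card_range, show K + 2 - 1 = K + 1 by omega] at hsum
  have hneg : ∑ i ∈ range (K + 2), (-(c i) * ∏ j ∈ range (K + 2), (c i - 1 - c j)) *
        (∏ j ∈ (range (K + 2)).erase i, (c i - c j)⁻¹)
      = -∑ i ∈ range (K + 2), A.eval (c i) * (∏ j ∈ (range (K + 2)).erase i, (c i - c j)⁻¹) := by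
    rw [← Finset.sum_neg_distrib]
    refine Finset.sum_congr rfl fun i hi => ?_
    rw [hvals i hi]
    ring
  rw [hneg, hsum, hcoeff]
  push_cast
  ring

/-- Identity (II), moment 0. -/
lemma sum_moment0 (hinj : Set.InjOn c (range (K + 2))) :
    ∑ i ∈ range (K + 2), (∏ j ∈ range (K + 1), (c i - (c j - 1))) *
        (∏ j ∈ (range (K + 2)).erase i, (c i - c j)⁻¹) = 1 := by
  set u : ℚ[X] := ∏ j ∈ range (K + 1), (X - C (c j - 1)) with hu
  have hdeg : u.degree < ((range (K + 2)).card : ℕ) := by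
    rw [card_range]
    have h1 : u.degree ≤ (K + 1 : ℕ) := by
      rw [hu]
      calc (∏ j ∈ range (K + 1), (X - C (c j - 1))).degree
          ≤ (∏ j ∈ range (K + 1), (X - C (c j - 1))).natDegree := degree_le_natDegree
        _ = ((K + 1 : ℕ) : WithBot ℕ) := by rw [nodal_natDegree]
    calc u.degree ≤ ((K + 1 : ℕ) : WithBot ℕ) := h1
      _ < ((K + 2 : ℕ) : WithBot ℕ) := by
          rw [Nat.cast_lt]; omega
  have hsum := lagrange_sum hinj u hdeg
  rw [card_range, show K + 2 - 1 = K + 1 by omega] at hsum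
  have htop : u.coeff (K + 1) = 1 := by
    have := nodal_coeff_top (fun j => c j - 1) (K + 1); rwa [← hu] at this
  rw [htop] at hsum
  calc ∑ i ∈ range (K + 2), (∏ j ∈ range (K + 1), (c i - (c j - 1))) *
        (∏ j ∈ (range (K + 2)).erase i, (c i - c j)⁻¹)
      = ∑ i ∈ range (K + 2), eval (c i) u * ∏ j ∈ (range (K + 2)).erase i, (c i - c j)⁻¹ :=
        Finset.sum_congr rfl fun i hi => by rw [hu, nodal_eval]
    _ = 1 := hsum

end identities

/-- Identity (II), moment 1. -/
lemma sum_moment1 (hinj : Set.InjOn c (range (K + 2))) (hc0 : c (K + 1) = 0) :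
    ∑ i ∈ range (K + 2), ((c i - ((K : ℚ) + 1)) * ∏ j ∈ range (K + 1), (c i - (c j - 1))) *
        (∏ j ∈ (range (K + 2)).erase i, (c i - c j)⁻¹) = 0 := by
  set d : ℚ := (K : ℚ) + 1 with hd
  set S1 : ℚ := ∑ i ∈ range (K + 2), c i with hS1
  set u : ℚ[X] := ∏ j ∈ range (K + 1), (X - C (c j - 1)) with hu
  set Q : ℚ[X] := ∏ j ∈ range (K + 2), (X - C (c j)) with hQ
  set A : ℚ[X] := u * (X - C d) - Q with hA
  have hadd : K + 1 + 1 = K + 2 := by omega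
  have hS1r : ∑ j ∈ range (K + 1), c j = S1 := by
    rw [hS1]
    conv_rhs => rw [Finset.sum_range_succ]
    rw [hc0, add_zero]
  have hS1u : ∑ j ∈ range (K + 1), (c j - 1) = S1 - (K + 1) := by
    rw [Finset.sum_sub_distrib, Finset.sum_const, card_range, hS1r]
    push_cast; ring
  have hutop : u.coeff (K + 1) = 1 := by
    have := nodal_coeff_top (fun j => c j - 1) (K + 1); rwa [← hu] at this
  have huone : u.coeff K = -(S1 - (K + 1)) := by
    have := nodal_coeff_one (fun j => c j - 1) K; rwa [← hu, hS1u] at this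
  have huhigh : ∀ m, K + 1 < m → u.coeff m = 0 := by
    intro m hm; rw [hu]; exact nodal_coeff_zero_of_gt _ hm
  have hQtop : Q.coeff (K + 2) = 1 := by
    have := nodal_coeff_top c (K + 2); rwa [← hQ] at this
  have hQone : Q.coeff (K + 1) = -S1 := by
    have := nodal_coeff_one c (K + 1); rw [hadd] at this; rwa [← hQ, ← hS1] at this
  have hQhigh : ∀ m, K + 2 < m → Q.coeff m = 0 := by
    intro m hm; rw [hQ]; exact nodal_coeff_zero_of_gt _ hm
  have hcoeffA : ∀ k : ℕ, A.coeff (k + 1)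
      = (u.coeff k - d * u.coeff (k + 1)) - Q.coeff (k + 1) := by
    intro k
    rw [hA, coeff_sub, coeff_mul_linear]
  have hdeg : A.degree < ((range (K + 2)).card : ℕ) := by
    rw [card_range, Polynomial.degree_lt_iff_coeff_zero]
    intro m hm
    have hm' : K + 2 ≤ m := by exact_mod_cast hm
    obtain ⟨k, rfl⟩ : ∃ k, m = k + 1 := ⟨m - 1, by omega⟩
    rw [hcoeffA k]
    rcases Nat.lt_trichotomy k (K + 1) with hk | hk | hk
    · omega
    · subst hk
      rw [hutop, huhigh _ (by omega), hQtop]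
      ring
    · rw [huhigh _ hk, huhigh _ (by omega), hQhigh _ (by omega)]
      ring
  have hsum := lagrange_sum hinj A hdeg
  rw [card_range, show K + 2 - 1 = K + 1 by omega] at hsum
  have hcoeff : A.coeff (K + 1) = 0 := by
    rw [hcoeffA K, hutop, huone, hQone]
    ring
  rw [hcoeff] at hsum
  rw [← hsum]
  refine Finset.sum_congr rfl fun i hi => ?_
  rw [hA, eval_sub, eval_mul, eval_sub, eval_X, eval_C, hQ, nodal_eval_self _ hi, hu, nodal_eval]
  ring

/-- Identity (II), moment 2. -/
lemma sum_moment2 (hinj : Set.InjOn c (range (K + 2))) (hc0 : c (K + 1) = 0) :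
    ∑ i ∈ range (K + 2), ((c i - ((K : ℚ) + 1)) ^ 2 * ∏ j ∈ range (K + 1), (c i - (c j - 1))) *
        (∏ j ∈ (range (K + 2)).erase i, (c i - c j)⁻¹)
      = (∑ i ∈ range (K + 2), c i) - (K + 2) * (K + 1) / 2 := by
  set d : ℚ := (K : ℚ) + 1 with hd
  set S1 : ℚ := ∑ i ∈ range (K + 2), c i with hS1
  set S2 : ℚ := ∑ i ∈ range (K + 2), (c i) ^ 2 with hS2
  set w : ℕ → ℚ := fun j => if j = K + 1 then d else c j - 1 with hw
  set u : ℚ[X] := ∏ j ∈ range (K + 1), (X - C (c j - 1)) with hu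
  set v : ℚ[X] := ∏ j ∈ range (K + 2), (X - C (w j)) with hv
  set Q : ℚ[X] := ∏ j ∈ range (K + 2), (X - C (c j)) with hQ
  set A : ℚ[X] := v * (X - C d) - Q * (X - C d) with hA
  have hadd : K + 1 + 1 = K + 2 := by omega
  have hS1r : ∑ j ∈ range (K + 1), c j = S1 := by
    rw [hS1]
    conv_rhs => rw [Finset.sum_range_succ]
    rw [hc0, add_zero]
  have hS2r : ∑ j ∈ range (K + 1), (c j) ^ 2 = S2 := by
    rw [hS2]
    conv_rhs => rw [Finset.sum_range_succ]
    rw [hc0]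
    norm_num
  have hS1u : ∑ j ∈ range (K + 1), (c j - 1) = S1 - (K + 1) := by
    rw [Finset.sum_sub_distrib, Finset.sum_const, card_range, hS1r]
    push_cast; ring
  have hS2u : ∑ j ∈ range (K + 1), (c j - 1) ^ 2 = S2 - 2 * S1 + (K + 1) := by
    have h0 : ∀ j ∈ range (K + 1), (c j - 1) ^ 2 = (c j) ^ 2 - (2 * c j - 1) :=
      fun j _ => by ring
    rw [Finset.sum_congr rfl h0, Finset.sum_sub_distrib, Finset.sum_sub_distrib,
      Finset.sum_const, card_range, ← Finset.mul_sum, hS1r, hS2r]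
    push_cast; ring
  have hwlast : w (K + 1) = d := by
    simp only [hw]
    simp
  have hwlt : ∀ j, j < K + 1 → w j = c j - 1 := by
    intro j hj
    simp only [hw]
    rw [if_neg (by omega)]
  have hS1v : ∑ j ∈ range (K + 2), w j = S1 := by
    rw [Finset.sum_range_succ, hwlast,
      Finset.sum_congr rfl (fun j hj => hwlt j (mem_range.mp hj)), hS1u, hd]
    ring
  have hS2v : ∑ j ∈ range (K + 2), (w j) ^ 2 = S2 - 2 * S1 + (K + 1) + d ^ 2 := by
    rw [Finset.sum_range_succ, hwlast,
      show ∑ j ∈ range (K + 1), w j ^ 2 = ∑ j ∈ range (K + 1), (c j - 1) ^ 2 from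
        Finset.sum_congr rfl fun j hj => by rw [hwlt j (mem_range.mp hj)], hS2u]
  have hveq : v = u * (X - C d) := by
    rw [hv, Finset.prod_range_succ, hwlast]
    congr 1
    exact Finset.prod_congr rfl fun j hj => by rw [hwlt j (mem_range.mp hj)]
  have hvtop : v.coeff (K + 2) = 1 := by
    have := nodal_coeff_top w (K + 2); rwa [← hv] at this
  have hvone : v.coeff (K + 1) = -S1 := by
    have := nodal_coeff_one w (K + 1); rw [hadd] at this; rwa [← hv, hS1v] at this
  have hvtwo : v.coeff K = (S1 ^ 2 - (S2 - 2 * S1 + (K + 1) + d ^ 2)) / 2 := by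
    have := nodal_coeff_two w K; rwa [← hv, hS1v, hS2v] at this
  have hvhigh : ∀ m, K + 2 < m → v.coeff m = 0 := by
    intro m hm; rw [hv]; exact nodal_coeff_zero_of_gt _ hm
  have hQtop : Q.coeff (K + 2) = 1 := by
    have := nodal_coeff_top c (K + 2); rwa [← hQ] at this
  have hQone : Q.coeff (K + 1) = -S1 := by
    have := nodal_coeff_one c (K + 1); rw [hadd] at this; rwa [← hQ, ← hS1] at this
  have hQtwo : Q.coeff K = (S1 ^ 2 - S2) / 2 := by
    have := nodal_coeff_two c K; rwa [← hQ, ← hS1, ← hS2] at this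
  have hQhigh : ∀ m, K + 2 < m → Q.coeff m = 0 := by
    intro m hm; rw [hQ]; exact nodal_coeff_zero_of_gt _ hm
  have hcoeffA : ∀ k : ℕ, A.coeff (k + 1)
      = (v.coeff k - d * v.coeff (k + 1)) - (Q.coeff k - d * Q.coeff (k + 1)) := by
    intro k
    rw [hA, coeff_sub, coeff_mul_linear, coeff_mul_linear]
  have hdeg : A.degree < ((range (K + 2)).card : ℕ) := by
    rw [card_range, Polynomial.degree_lt_iff_coeff_zero]
    intro m hm
    have hm' : K + 2 ≤ m := by exact_mod_cast hm
    obtain ⟨k, rfl⟩ : ∃ k, m = k + 1 := ⟨m - 1, by omega⟩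
    rw [hcoeffA k]
    rcases Nat.lt_trichotomy k (K + 2) with hk | hk | hk
    · have hk1 : k = K + 1 := by omega
      subst hk1
      rw [hvone, hvtop, hQone, hQtop]
      ring
    · subst hk
      rw [hvtop, hQtop, hvhigh _ (by omega), hQhigh _ (by omega)]
      ring
    · rw [hvhigh _ hk, hvhigh _ (by omega), hQhigh _ hk, hQhigh _ (by omega)]
      ring
  have hsum := lagrange_sum hinj A hdeg
  rw [card_range, show K + 2 - 1 = K + 1 by omega] at hsum
  have hcoeff : A.coeff (K + 1) = S1 - (K + 2) * (K + 1) / 2 := by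
    rw [hcoeffA K, hvtwo, hvone, hQtwo, hQone, hd]
    push_cast
    ring
  rw [hcoeff] at hsum
  rw [← hd] at hsum
  rw [← hsum]
  refine Finset.sum_congr rfl fun i hi => ?_
  rw [hA, eval_sub, eval_mul, eval_mul, eval_sub, eval_X, eval_C, hQ, nodal_eval_self _ hi,
    hveq, eval_mul, eval_sub, eval_X, eval_C, hu, nodal_eval]
  ring
noncomputable def T (α β : ℚ) (Y : YoungDiagram) : ℚ := Ct α Y * Ct β Y / (Hk Y) ^ 2

lemma colLen_le_card (Y : YoungDiagram) : Y.colLen 0 ≤ Y.cells.card := by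
  rw [Y.colLen_eq_card]
  exact Finset.card_le_card fun c hc => (YoungDiagram.mem_col_iff.mp hc).1

lemma bq_strict_anti (Y : YoungDiagram) (N : ℕ) {r s : ℕ} (h : r < s) :
    bq Y N s + 1 ≤ bq Y N r := by
  have h1 : Y.rowLen s ≤ Y.rowLen r := Y.rowLen_anti r s (by omega)
  have h2 : (Y.rowLen s : ℚ) ≤ Y.rowLen r := by exact_mod_cast h1
  have h3 : (r : ℚ) + 1 ≤ s := by exact_mod_cast h
  unfold bq
  linarith

lemma bq_injOn (Y : YoungDiagram) (N : ℕ) : Set.InjOn (bq Y N) (range N) := by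
  intro a _ b _ hab
  rcases Nat.lt_trichotomy a b with h | h | h
  · have := bq_strict_anti Y N h; linarith
  · exact h
  · have := bq_strict_anti Y N h; linarith

lemma bq_last_zero {Y : YoungDiagram} {N : ℕ} (h : Y.colLen 0 ≤ N - 1) (hN : 1 ≤ N) :
    bq Y N (N - 1) = 0 := by
  have h0 : Y.rowLen (N - 1) = 0 := rowLen_le_of_colLen_le h (le_refl _)
  unfold bq
  rw [h0]
  have : ((N - 1 : ℕ) : ℚ) = (N : ℚ) - 1 := by
    have : (1 : ℕ) ≤ N := hN
    push_cast [Nat.cast_sub this]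
    ring
  rw [this]
  push_cast
  ring

lemma gauss_sum (N : ℕ) : ∑ i ∈ range N, (i : ℚ) = N * (N - 1) / 2 := by
  induction N with
  | zero => simp
  | succ n ih =>
    rw [Finset.sum_range_succ, ih]
    push_cast
    ring

lemma bq_sum {Y : YoungDiagram} {N n : ℕ} (hcard : Y.cells.card = n) (hcol : Y.colLen 0 ≤ N) :
    ∑ i ∈ range N, bq Y N i = n + N * (N - 1) / 2 := by
  have h1 : (n : ℚ) = ∑ i ∈ range N, (Y.rowLen i : ℚ) := by
    rw [← hcard, card_cells Y hcol]
    push_cast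
    rfl
  calc ∑ i ∈ range N, bq Y N i
      = ∑ i ∈ range N, ((Y.rowLen i : ℚ) + ((N : ℚ) - 1) - (i : ℚ)) :=
        Finset.sum_congr rfl fun i _ => by unfold bq; ring
    _ = ((∑ i ∈ range N, (Y.rowLen i : ℚ)) + ∑ i ∈ range N, ((N : ℚ) - 1))
          - ∑ i ∈ range N, (i : ℚ) := by
        rw [Finset.sum_sub_distrib, Finset.sum_add_distrib]
    _ = (n : ℚ) + N * (N - 1) / 2 := by
        rw [← h1, Finset.sum_const, card_range, gauss_sum, nsmul_eq_mul]
        ring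

lemma bq_addBox_self {Y : YoungDiagram} {i : ℕ} (h : addable Y i) (N : ℕ) :
    bq (addBox Y i) N i = bq Y N i + 1 := by
  unfold bq
  rw [rowLen_addBox_self h]
  push_cast
  ring

lemma bq_addBox_ne {Y : YoungDiagram} {i : ℕ} (h : addable Y i) (N : ℕ) {r : ℕ} (hr : r ≠ i) :
    bq (addBox Y i) N r = bq Y N r := by
  unfold bq
  rw [rowLen_addBox_ne h hr]

lemma Ct_addBox (x : ℚ) {Y : YoungDiagram} {i : ℕ} (h : addable Y i) (N : ℕ) :
    Ct x (addBox Y i) = (x + bq Y N i + 1 - N) * Ct x Y := by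
  unfold Ct
  rw [cells_addBox h,
    Finset.prod_insert (by rw [YoungDiagram.mem_cells]; exact not_mem_self_rowLen Y i)]
  congr 1
  unfold bq
  push_cast
  ring

lemma addable_le_colLen {Y : YoungDiagram} {i : ℕ} (h : addable Y i) : i ≤ Y.colLen 0 := by
  rcases Nat.eq_zero_or_pos i with rfl | hi
  · omega
  · have h1 : 0 < Y.rowLen (i - 1) := by
      have := h (i - 1) (by omega)
      omega
    have h2 : (i - 1, 0) ∈ Y := YoungDiagram.mem_iff_lt_rowLen.mpr h1
    have := YoungDiagram.mem_iff_lt_colLen.mp h2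
    omega

lemma colLen_bot (j : ℕ) : (⊥ : YoungDiagram).colLen j = 0 :=
  colLen_eq (fun i hi => absurd hi (by omega)) (YoungDiagram.notMem_bot _)

lemma card_eq_zero_iff_bot {Y : YoungDiagram} : Y.cells.card = 0 ↔ Y = ⊥ := by
  constructor
  · intro h
    apply YoungDiagram.ext
    rw [Finset.card_eq_zero.mp h, YoungDiagram.cells_bot]
  · rintro rfl
    rw [YoungDiagram.cells_bot]
    rfl

lemma Ct_bot (x : ℚ) : Ct x ⊥ = 1 := by
  unfold Ct
  rw [YoungDiagram.cells_bot]
  rfl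

lemma Hk_bot : Hk ⊥ = 1 := by
  unfold Hk
  rw [YoungDiagram.cells_bot]
  rfl

instance Pn_finite (n : ℕ) : Finite {Y : YoungDiagram // Y.cells.card = n} := by
  have hmap : ∀ Y : {Y : YoungDiagram // Y.cells.card = n},
      Y.1.cells ∈ (range n ×ˢ range n).powerset := by
    rintro ⟨Y, hY⟩
    rw [Finset.mem_powerset]
    rintro ⟨i, j⟩ hc
    rw [YoungDiagram.mem_cells] at hc
    have hrow : (range (i + 1)).image (fun r => (r, j)) ⊆ Y.cells := by
      intro c hcm
      simp only [mem_image, mem_range] at hcm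
      obtain ⟨r, hr, rfl⟩ := hcm
      rw [YoungDiagram.mem_cells]
      exact Y.up_left_mem (by omega) (le_refl j) hc
    have hcol : (range (j + 1)).image (fun s => (i, s)) ⊆ Y.cells := by
      intro c hcm
      simp only [mem_image, mem_range] at hcm
      obtain ⟨s, hs, rfl⟩ := hcm
      rw [YoungDiagram.mem_cells]
      exact Y.up_left_mem (le_refl i) (by omega) hc
    have h1 : i + 1 ≤ n := by
      have := Finset.card_le_card hrow
      rw [Finset.card_image_of_injective _ (fun a b hab => by
        simpa using (Prod.mk.injEq .. ▸ hab).1), card_range] at this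
      omega
    have h2 : j + 1 ≤ n := by
      have := Finset.card_le_card hcol
      rw [Finset.card_image_of_injective _ (fun a b hab => by
        simpa using (Prod.mk.injEq .. ▸ hab).2), card_range] at this
      omega
    simp only [mem_product, mem_range]
    omega
  have : Function.Injective
      (fun Y : {Y : YoungDiagram // Y.cells.card = n} =>
        (⟨Y.1.cells, hmap Y⟩ : {s // s ∈ (range n ×ˢ range n).powerset})) := by
    rintro ⟨Y, hY⟩ ⟨Z, hZ⟩ h
    simp only [Subtype.mk.injEq] at h
    exact Subtype.ext (YoungDiagram.ext h)
  exact Finite.of_injective _ this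
/-- the weight appearing when removing the corner in row `i` from `Y` (with `|Y| = n+1`). -/
noncomputable def Rterm (Y : YoungDiagram) (n i : ℕ) : ℚ :=
  (-(bq Y (n + 2) i) * ∏ j ∈ range (n + 2), (bq Y (n + 2) i - 1 - bq Y (n + 2) j)) *
    ∏ j ∈ (range (n + 2)).erase i, (bq Y (n + 2) i - bq Y (n + 2) j)⁻¹

/-- the weight appearing when adding a corner in row `i` to `Y` (with `|Y| = n`). -/
noncomputable def Sterm (α β : ℚ) (Y : YoungDiagram) (n i : ℕ) : ℚ :=
  ((α + (bq Y (n + 2) i - ((n : ℚ) + 1))) * (β + (bq Y (n + 2) i - ((n : ℚ) + 1))) *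
      ∏ j ∈ range (n + 1), (bq Y (n + 2) i - (bq Y (n + 2) j - 1))) *
    ∏ j ∈ (range (n + 2)).erase i, (bq Y (n + 2) i - bq Y (n + 2) j)⁻¹

lemma sum_Rterm {n : ℕ} {Y : YoungDiagram} (hcard : Y.cells.card = n + 1) :
    ∑ i ∈ range (n + 2), Rterm Y n i = (n : ℚ) + 1 := by
  have hcol : Y.colLen 0 ≤ n + 2 := by have h := colLen_le_card Y; omega
  have h := sum_removal (K := n) (c := bq Y (n + 2)) (bq_injOn Y (n + 2))
  have hs := bq_sum hcard hcol
  unfold Rterm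
  rw [h, hs]
  push_cast
  ring

lemma sum_Sterm (α β : ℚ) {n : ℕ} {Y : YoungDiagram} (hcard : Y.cells.card = n) :
    ∑ i ∈ range (n + 2), Sterm α β Y n i = α * β + n := by
  have hcol : Y.colLen 0 ≤ n + 1 := by have h := colLen_le_card Y; omega
  have hc0 : bq Y (n + 2) (n + 1) = 0 := by
    have := bq_last_zero (Y := Y) (N := n + 2) (by simpa using hcol) (by omega)
    simpa using this
  have hinj := bq_injOn Y (n + 2)
  have h0 := sum_moment0 (K := n) (c := bq Y (n + 2)) hinj
  have h1 := sum_moment1 (K := n) (c := bq Y (n + 2)) hinj hc0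
  have h2 := sum_moment2 (K := n) (c := bq Y (n + 2)) hinj hc0
  have hs := bq_sum hcard (show Y.colLen 0 ≤ n + 2 by omega)
  have hexp : ∀ i ∈ range (n + 2), Sterm α β Y n i =
      α * β * ((∏ j ∈ range (n + 1), (bq Y (n + 2) i - (bq Y (n + 2) j - 1))) *
          ∏ j ∈ (range (n + 2)).erase i, (bq Y (n + 2) i - bq Y (n + 2) j)⁻¹)
      + (α + β) * (((bq Y (n + 2) i - ((n : ℚ) + 1)) *
            ∏ j ∈ range (n + 1), (bq Y (n + 2) i - (bq Y (n + 2) j - 1))) *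
          ∏ j ∈ (range (n + 2)).erase i, (bq Y (n + 2) i - bq Y (n + 2) j)⁻¹)
      + (((bq Y (n + 2) i - ((n : ℚ) + 1)) ^ 2 *
            ∏ j ∈ range (n + 1), (bq Y (n + 2) i - (bq Y (n + 2) j - 1))) *
          ∏ j ∈ (range (n + 2)).erase i, (bq Y (n + 2) i - bq Y (n + 2) j)⁻¹) := by
    intro i _
    unfold Sterm
    ring
  rw [Finset.sum_congr rfl hexp, Finset.sum_add_distrib, Finset.sum_add_distrib,
    ← Finset.mul_sum, ← Finset.mul_sum, h0, h1, h2, hs]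
  push_cast
  ring

lemma Rterm_vanish {n : ℕ} {Y : YoungDiagram} (hcard : Y.cells.card = n + 1) {i : ℕ}
    (hi : i < n + 2) (hrem : ¬removable Y i) : Rterm Y n i = 0 := by
  have hcol : Y.colLen 0 ≤ n + 1 := by
    have := colLen_le_card Y
    omega
  rcases Nat.eq_or_lt_of_le (Nat.lt_succ_iff.mp hi) with heq | hlt
  · -- i = n + 1 : bq = 0
    have hc0 : bq Y (n + 2) i = 0 := by
      have := bq_last_zero (Y := Y) (N := n + 2) (by simpa using hcol) (by omega)
      simpa [heq] using this
    unfold Rterm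
    rw [hc0]
    ring
  · -- rowLen (i+1) = rowLen i, use factor j = i + 1
    have hr : Y.rowLen (i + 1) = Y.rowLen i := by
      unfold removable at hrem
      have := Y.rowLen_anti i (i + 1) (by omega)
      omega
    have hfac : bq Y (n + 2) i - 1 - bq Y (n + 2) (i + 1) = 0 := by
      unfold bq
      rw [hr]
      push_cast
      ring
    unfold Rterm
    rw [Finset.prod_eq_zero (mem_range.mpr (show i + 1 < n + 2 by omega)) hfac]
    ring

lemma Sterm_vanish (α β : ℚ) {n : ℕ} {Y : YoungDiagram} {i : ℕ}
    (hi : i < n + 2) (hadd : ¬addable Y i) : Sterm α β Y n i = 0 := by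
  unfold addable at hadd
  push_neg at hadd
  obtain ⟨r, hr1, hr2⟩ := hadd
  have hi1 : 1 ≤ i := by omega
  have hreq : Y.rowLen (i - 1) = Y.rowLen i := by
    have h1 := Y.rowLen_anti r (i - 1) (by omega)
    have h2 := Y.rowLen_anti (i - 1) i (by omega)
    omega
  have hfac : bq Y (n + 2) i - (bq Y (n + 2) (i - 1) - 1) = 0 := by
    unfold bq
    rw [hreq]
    have : ((i - 1 : ℕ) : ℚ) = (i : ℚ) - 1 := by
      push_cast [Nat.cast_sub hi1]
      ring
    rw [this]
    ring
  unfold Sterm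
  rw [Finset.prod_eq_zero (mem_range.mpr (show i - 1 < n + 1 by omega)) hfac]
  ring
lemma bq_nonneg (Y : YoungDiagram) {N i : ℕ} (hi : i < N) : 0 ≤ bq Y N i := by
  unfold bq
  have h1 : (i : ℚ) + 1 ≤ N := by exact_mod_cast hi
  have h2 : (0 : ℚ) ≤ Y.rowLen i := by positivity
  linarith

lemma pair_step (α β : ℚ) {n : ℕ} {Y : YoungDiagram} (hcard : Y.cells.card = n) {i : ℕ}
    (hadd : addable Y i) :
    T α β (addBox Y i) * Rterm (addBox Y i) n i = T α β Y * Sterm α β Y n i := by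
  set N := n + 2 with hN
  set μ := addBox Y i with hμ
  set c := bq Y N with hc
  have hcolY : Y.colLen 0 ≤ n := hcard ▸ colLen_le_card Y
  have hi : i < n + 1 := by
    have := addable_le_colLen hadd
    omega
  have hiN : i < N := by omega
  have hcolm : μ.colLen 0 ≤ n + 1 := by
    have h1 := colLen_le_card μ
    rw [hμ, card_addBox hadd, hcard] at h1
    exact h1
  have hc0 : c (n + 1) = 0 := by
    have := bq_last_zero (Y := Y) (N := N) (by simp [hN]; omega) (by omega)
    simpa [hN] using this
  -- beta numbers of μ
  have hbm_self : bq μ N i = c i + 1 := bq_addBox_self hadd N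
  have hbm_ne : ∀ r, r ≠ i → bq μ N r = c r := fun r hr => bq_addBox_ne hadd N hr
  -- nonzero denominators
  have hP1ne : ∀ j ∈ (range N).erase i, c i - c j ≠ 0 := by
    intro j hj
    obtain ⟨hji, hjN⟩ := Finset.mem_erase.mp hj
    intro hzero
    exact hji (bq_injOn Y N (Finset.mem_coe.mpr hjN) (Finset.mem_coe.mpr (mem_range.mpr hiN))
      (by linarith))
  have hP2ne : ∀ j ∈ (range N).erase i, c i + 1 - c j ≠ 0 := by
    intro j hj
    obtain ⟨hji, hjN⟩ := Finset.mem_erase.mp hj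
    rcases Nat.lt_or_ge j i with hlt | hge
    · -- j < i : c j ≥ c i + 2
      have h1 : Y.rowLen i + 1 ≤ Y.rowLen j := hadd j hlt
      have h1' : (Y.rowLen i : ℚ) + 1 ≤ Y.rowLen j := by exact_mod_cast h1
      have h2 : (j : ℚ) + 1 ≤ i := by exact_mod_cast hlt
      unfold c
      unfold bq
      intro hzero
      have : (0:ℚ) = (Y.rowLen j - Y.rowLen i) + (i - j) - 1 := by linarith [hzero]
      linarith
    · have hgt : i < j := by omega
      have := bq_strict_anti Y N hgt
      intro hzero
      rw [← hc] at this
      linarith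
  set P1 := ∏ j ∈ (range N).erase i, (c i - c j) with hP1
  set P2 := ∏ j ∈ (range N).erase i, (c i + 1 - c j) with hP2
  have hP1nz : P1 ≠ 0 := Finset.prod_ne_zero_iff.mpr hP1ne
  have hP2nz : P2 ≠ 0 := Finset.prod_ne_zero_iff.mpr hP2ne
  have hc1nz : c i + 1 ≠ 0 := by
    have := bq_nonneg Y hiN
    rw [← hc] at this
    linarith
  -- hook ratio
  have hstar : Hk μ * P2 = Hk Y * (c i + 1) * P1 := by
    have := hook_ratio hadd hiN (by omega) (show (addBox Y i).colLen 0 ≤ N by rw [← hμ]; omega)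
    rw [hP1, hP2, hc, hμ]
    exact this
  -- Uterm relation
  have hU : (∏ j ∈ range (n + 1), (c i - (c j - 1))) * (c i + 1) = P2 := by
    have h1 : ∏ j ∈ range N, (c i + 1 - c j) = P2 := by
      rw [hP2, ← Finset.mul_prod_erase _ _ (mem_range.mpr hiN)]
      have : c i + 1 - c i = 1 := by ring
      rw [this, one_mul]
    have h2 : ∏ j ∈ range N, (c i + 1 - c j)
        = (∏ j ∈ range (n + 1), (c i + 1 - c j)) * (c i + 1 - c (n + 1)) := by
      rw [hN, Finset.prod_range_succ]
    rw [← h1, h2, hc0]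
    have h3 : ∏ j ∈ range (n + 1), (c i - (c j - 1)) = ∏ j ∈ range (n + 1), (c i + 1 - c j) :=
      Finset.prod_congr rfl fun j _ => by ring
    rw [h3]
    ring
  -- Rterm in terms of Y data
  have hR : Rterm μ n i = ((c i + 1) * P1) * P2⁻¹ := by
    unfold Rterm
    rw [← hN]
    have h1 : ∏ j ∈ range N, (bq μ N i - 1 - bq μ N j) = -P1 := by
      rw [← Finset.mul_prod_erase _ _ (mem_range.mpr hiN)]
      have h3 : ∏ j ∈ (range N).erase i, (bq μ N i - 1 - bq μ N j) = P1 := by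
        rw [hP1]
        refine Finset.prod_congr rfl fun j hj => ?_
        rw [hbm_self, hbm_ne j (Finset.mem_erase.mp hj).1]
        ring
      rw [h3, hbm_self]
      ring
    have h4 : ∏ j ∈ (range N).erase i, (bq μ N i - bq μ N j)⁻¹ = P2⁻¹ := by
      rw [hP2, ← Finset.prod_inv_distrib]
      refine Finset.prod_congr rfl fun j hj => ?_
      rw [hbm_self, hbm_ne j (Finset.mem_erase.mp hj).1]
    rw [h1, h4, hbm_self]
    ring
  -- Sterm in terms of P1, P2
  have hS : Sterm α β Y n i = (α + (c i - ((n : ℚ) + 1))) * (β + (c i - ((n : ℚ) + 1))) *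
      (∏ j ∈ range (n + 1), (c i - (c j - 1))) * P1⁻¹ := by
    unfold Sterm
    rw [← hN, ← hc, hP1, ← Finset.prod_inv_distrib]
  -- content
  have hcast : (N : ℚ) = (n : ℚ) + 2 := by rw [hN]; push_cast; ring
  have hCa : Ct α μ = (α + (c i - ((n : ℚ) + 1))) * Ct α Y := by
    calc Ct α μ = (α + bq Y N i + 1 - (N : ℚ)) * Ct α Y := Ct_addBox α hadd N
      _ = (α + (c i - ((n : ℚ) + 1))) * Ct α Y := by rw [hc, hcast]; ring
  have hCb : Ct β μ = (β + (c i - ((n : ℚ) + 1))) * Ct β Y := by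
    calc Ct β μ = (β + bq Y N i + 1 - (N : ℚ)) * Ct β Y := Ct_addBox β hadd N
      _ = (β + (c i - ((n : ℚ) + 1))) * Ct β Y := by rw [hc, hcast]; ring
  -- key squared identity
  have hkey : Hk μ ^ 2 * ((∏ j ∈ range (n + 1), (c i - (c j - 1))) * P2)
      = Hk Y ^ 2 * (c i + 1) * P1 ^ 2 := by
    apply mul_right_cancel₀ hc1nz
    have hsq : (Hk μ * P2) ^ 2 = (Hk Y * (c i + 1) * P1) ^ 2 := by rw [hstar]
    linear_combination (Hk μ ^ 2 * P2) * hU + hsq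
  -- final
  have hHμnz : Hk μ ≠ 0 := ne_of_gt (Hk_pos μ)
  have hHYnz : Hk Y ≠ 0 := ne_of_gt (Hk_pos Y)
  have key2 : ((c i + 1) * P1) * P2⁻¹ * (Hk μ ^ 2)⁻¹
      = (∏ j ∈ range (n + 1), (c i - (c j - 1))) * P1⁻¹ * (Hk Y ^ 2)⁻¹ := by
    apply mul_right_cancel₀ (show (Hk μ ^ 2 * P2) * (Hk Y ^ 2 * P1) ≠ 0 by
      have h1 := Hk_pos μ
      have h2 := Hk_pos Y
      positivity)
    have eM : (Hk μ ^ 2)⁻¹ * Hk μ ^ 2 = 1 := inv_mul_cancel₀ (pow_ne_zero _ (ne_of_gt (Hk_pos μ)))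
    have eY : (Hk Y ^ 2)⁻¹ * Hk Y ^ 2 = 1 := inv_mul_cancel₀ (pow_ne_zero _ (ne_of_gt (Hk_pos Y)))
    have eP1 : P1⁻¹ * P1 = 1 := inv_mul_cancel₀ hP1nz
    have eP2 : P2⁻¹ * P2 = 1 := inv_mul_cancel₀ hP2nz
    linear_combination ((c i + 1) * P1 ^ 2 * Hk Y ^ 2 * ((Hk μ ^ 2)⁻¹ * Hk μ ^ 2)) * eP2
      + ((c i + 1) * P1 ^ 2 * Hk Y ^ 2) * eM
      - ((c i + 1) * P1 ^ 2 * Hk Y ^ 2 * (P1⁻¹ * P1)) * eY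
      - ((c i + 1) * P1 ^ 2 * Hk Y ^ 2) * eP1
      - ((P1⁻¹ * P1) * ((Hk Y ^ 2)⁻¹ * Hk Y ^ 2)) * hkey
  unfold T
  rw [hR, hS, hCa, hCb]
  linear_combination ((α + (c i - ((n : ℚ) + 1))) * (β + (c i - ((n : ℚ) + 1))) *
    Ct α Y * Ct β Y) * key2
noncomputable instance PnFintype (n : ℕ) : Fintype {Y : YoungDiagram // Y.cells.card = n} :=
  Fintype.ofFinite _

lemma step_eq (α β : ℚ) (n : ℕ) :
    ((n : ℚ) + 1) * ∑ μ : {Y : YoungDiagram // Y.cells.card = n + 1}, T α β μ.1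
      = (α * β + n) * ∑ Y : {Y : YoungDiagram // Y.cells.card = n}, T α β Y.1 := by
  classical
  have lhs1 : ((n : ℚ) + 1) * ∑ μ : {Y : YoungDiagram // Y.cells.card = n + 1}, T α β μ.1
      = ∑ μ : {Y : YoungDiagram // Y.cells.card = n + 1},
          ∑ i ∈ range (n + 2), T α β μ.1 * Rterm μ.1 n i := by
    rw [Finset.mul_sum]
    refine Finset.sum_congr rfl fun μ _ => ?_
    rw [← Finset.mul_sum, sum_Rterm μ.2]
    ring
  have rhs1 : (α * β + (n : ℚ)) * ∑ Y : {Y : YoungDiagram // Y.cells.card = n}, T α β Y.1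
      = ∑ Y : {Y : YoungDiagram // Y.cells.card = n},
          ∑ i ∈ range (n + 2), T α β Y.1 * Sterm α β Y.1 n i := by
    rw [Finset.mul_sum]
    refine Finset.sum_congr rfl fun Y _ => ?_
    rw [← Finset.mul_sum, sum_Sterm α β Y.2]
    ring
  rw [lhs1, rhs1]
  -- restrict to removable / addable indices
  have lhs2 : ∀ μ : {Y : YoungDiagram // Y.cells.card = n + 1},
      ∑ i ∈ range (n + 2), T α β μ.1 * Rterm μ.1 n i
        = ∑ i ∈ (range (n + 2)).filter (fun i => removable μ.1 i), T α β μ.1 * Rterm μ.1 n i := by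
    intro μ
    refine (Finset.sum_filter_of_ne fun i hi hne => ?_).symm
    by_contra hrem
    exact hne (by rw [Rterm_vanish μ.2 (mem_range.mp hi) hrem]; ring)
  have rhs2 : ∀ Y : {Y : YoungDiagram // Y.cells.card = n},
      ∑ i ∈ range (n + 2), T α β Y.1 * Sterm α β Y.1 n i
        = ∑ i ∈ (range (n + 2)).filter (fun i => addable Y.1 i), T α β Y.1 * Sterm α β Y.1 n i := by
    intro Y
    refine (Finset.sum_filter_of_ne fun i hi hne => ?_).symm
    by_contra hadd
    exact hne (by rw [Sterm_vanish α β (mem_range.mp hi) hadd]; ring)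
  rw [Finset.sum_congr rfl fun μ _ => lhs2 μ, Finset.sum_congr rfl fun Y _ => rhs2 Y]
  rw [Finset.sum_sigma', Finset.sum_sigma']
  refine (Finset.sum_bij (fun a ha => ?_) ?_ ?_ ?_ ?_).symm
  · -- the map
    refine ⟨⟨addBox a.1.1 a.2, ?_⟩, a.2⟩
    have hadd : addable a.1.1 a.2 := by
      have := (Finset.mem_sigma.mp ha).2
      exact (Finset.mem_filter.mp this).2
    rw [card_addBox hadd, a.1.2]
  · -- maps into
    intro a ha
    obtain ⟨ha1, ha2⟩ := Finset.mem_sigma.mp ha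
    have hadd : addable a.1.1 a.2 := (Finset.mem_filter.mp ha2).2
    have hi : a.2 ∈ range (n + 2) := (Finset.mem_filter.mp ha2).1
    rw [Finset.mem_sigma]
    exact ⟨Finset.mem_univ _, Finset.mem_filter.mpr ⟨hi, removable_addBox hadd⟩⟩
  · -- injective
    intro a1 ha1 a2 ha2 heq
    have hadd1 : addable a1.1.1 a1.2 := (Finset.mem_filter.mp (Finset.mem_sigma.mp ha1).2).2
    have hadd2 : addable a2.1.1 a2.2 := (Finset.mem_filter.mp (Finset.mem_sigma.mp ha2).2).2
    obtain ⟨h1, h2⟩ := Sigma.mk.inj_iff.mp heq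
    have hidx : a1.2 = a2.2 := by
      exact eq_of_heq h2
    have hbox : addBox a1.1.1 a1.2 = addBox a2.1.1 a2.2 := by
      have := congrArg Subtype.val h1
      exact this
    rw [hidx] at hbox hadd1
    have hY : a1.1 = a2.1 := Subtype.ext (addBox_injective hadd1 hadd2 hbox)
    exact Sigma.ext hY (by rw [hidx])
  · -- surjective
    intro b hb
    obtain ⟨hb1, hb2⟩ := Finset.mem_sigma.mp hb
    have hrem : removable b.1.1 b.2 := (Finset.mem_filter.mp hb2).2
    have hi : b.2 ∈ range (n + 2) := (Finset.mem_filter.mp hb2).1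
    obtain ⟨Y, hadd, hYeq⟩ := exists_addBox hrem
    have hcardY : Y.cells.card = n := by
      have := card_addBox hadd
      rw [hYeq, b.1.2] at this
      omega
    refine ⟨⟨⟨Y, hcardY⟩, b.2⟩, ?_, ?_⟩
    · rw [Finset.mem_sigma]
      exact ⟨Finset.mem_univ _, Finset.mem_filter.mpr ⟨hi, hadd⟩⟩
    · apply Sigma.ext
      · exact Subtype.ext hYeq
      · simp
  · -- values
    intro a ha
    have hadd : addable a.1.1 a.2 := (Finset.mem_filter.mp (Finset.mem_sigma.mp ha).2).2
    exact (pair_step α β a.1.2 hadd).symm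

lemma main_sum (α β : ℚ) (n : ℕ) :
    ∑ Y : {Y : YoungDiagram // Y.cells.card = n}, T α β Y.1
      = (ascPochhammer ℚ n).eval (α * β) / (Nat.factorial n : ℚ) := by
  induction n with
  | zero =>
    have y0 : {Y : YoungDiagram // Y.cells.card = 0} :=
      ⟨⊥, by rw [YoungDiagram.cells_bot]; rfl⟩
    haveI : Subsingleton {Y : YoungDiagram // Y.cells.card = 0} := by
      constructor
      rintro ⟨a, ha⟩ ⟨b, hb⟩
      apply Subtype.ext
      show a = b
      rw [card_eq_zero_iff_bot.mp ha, card_eq_zero_iff_bot.mp hb]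
    haveI : Unique {Y : YoungDiagram // Y.cells.card = 0} := uniqueOfSubsingleton y0
    rw [Fintype.sum_unique]
    show T α β (default : {Y : YoungDiagram // Y.cells.card = 0}).1 = _
    have hd : (default : {Y : YoungDiagram // Y.cells.card = 0}).1 = ⊥ :=
      card_eq_zero_iff_bot.mp (default : {Y : YoungDiagram // Y.cells.card = 0}).2
    rw [hd]
    unfold T
    rw [Ct_bot, Ct_bot, Hk_bot]
    simp [ascPochhammer]
  | succ n ih =>
    have hstep := step_eq α β n
    rw [ih] at hstep
    have hn1 : ((n : ℚ) + 1) ≠ 0 := by positivity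
    have hfac : (Nat.factorial n : ℚ) ≠ 0 := by
      exact_mod_cast Nat.cast_ne_zero.mpr (Nat.factorial_ne_zero n)
    have hpoch : (ascPochhammer ℚ (n + 1)).eval (α * β)
        = (ascPochhammer ℚ n).eval (α * β) * (α * β + n) := by
      rw [ascPochhammer_succ_right, eval_mul, eval_add, eval_X, eval_natCast]
    have hfacs : (Nat.factorial (n + 1) : ℚ) = ((n : ℚ) + 1) * Nat.factorial n := by
      rw [Nat.factorial_succ]
      push_cast
      ring
    rw [hpoch, hfacs]
    field_simp
    field_simp at hstep
    linear_combination hstep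
lemma row_reflect (ν : ℚ) (i L : ℕ) :
    ∏ j ∈ range L, (ν + (L : ℚ) - j - i - 1) = ∏ j ∈ range L, (ν + (j : ℚ) - i) := by
  have h := Finset.prod_range_reflect (fun j => ν + (j : ℚ) - i) L
  rw [← h]
  refine Finset.prod_congr rfl fun j hj => ?_
  have hj' : j < L := mem_range.mp hj
  have : ((L - 1 - j : ℕ) : ℚ) = (L : ℚ) - 1 - j := by
    have h1 : j + 1 ≤ L := hj'
    push_cast [Nat.cast_sub (by omega : j ≤ L - 1), Nat.cast_sub (by omega : 1 ≤ L)]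
    ring
  rw [this]
  ring

lemma Zb_bot_right (ν : ℚ) (Y : YoungDiagram) : Zb ν ⊥ Y = Ct ν Y := by
  unfold Zb
  rw [YoungDiagram.cells_bot]
  rw [show (∏ s ∈ (∅ : Finset (ℕ × ℕ)), (1 + armQ ⊥ s + legQ Y s - ν)) = 1 from rfl, mul_one]
  have h1 : ∀ c ∈ Y.cells, 1 + armQ Y c + legQ ⊥ c + ν
      = ν + (Y.rowLen c.1 : ℚ) - c.2 - c.1 - 1 := by
    intro c _
    unfold armQ legQ
    rw [colLen_bot]
    push_cast
    ring
  rw [Finset.prod_congr rfl h1]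
  unfold Ct
  rw [prod_cells Y (le_refl (Y.colLen 0)) (fun i j => ν + (Y.rowLen i : ℚ) - j - i - 1),
    prod_cells Y (le_refl (Y.colLen 0)) (fun i j => ν + (j : ℚ) - i)]
  exact Finset.prod_congr rfl fun i _ => row_reflect ν i (Y.rowLen i)

lemma Zb_bot_left (ν : ℚ) (Y : YoungDiagram) : Zb ν Y ⊥ = Ct (-ν) Y := by
  unfold Zb
  rw [YoungDiagram.cells_bot]
  rw [show (∏ t ∈ (∅ : Finset (ℕ × ℕ)), (1 + armQ ⊥ t + legQ Y t + ν)) = 1 from rfl, one_mul]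
  have h1 : ∀ c ∈ Y.cells, 1 + armQ Y c + legQ ⊥ c - ν
      = -ν + (Y.rowLen c.1 : ℚ) - c.2 - c.1 - 1 := by
    intro c _
    unfold armQ legQ
    rw [colLen_bot]
    push_cast
    ring
  rw [Finset.prod_congr rfl h1]
  unfold Ct
  rw [prod_cells Y (le_refl (Y.colLen 0)) (fun i j => -ν + (Y.rowLen i : ℚ) - j - i - 1),
    prod_cells Y (le_refl (Y.colLen 0)) (fun i j => -ν + (j : ℚ) - i)]
  exact Finset.prod_congr rfl fun i _ => row_reflect (-ν) i (Y.rowLen i)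

lemma Z0_eq (Y : YoungDiagram) : Z0 Y = Hk Y ^ 2 := by
  unfold Z0 Zb
  have h1 : ∀ c ∈ Y.cells, 1 + armQ Y c + legQ Y c + 0 = hookQ Y c.1 c.2 := by
    intro c _
    unfold armQ legQ hookQ
    ring
  have h2 : ∀ c ∈ Y.cells, 1 + armQ Y c + legQ Y c - 0 = hookQ Y c.1 c.2 := by
    intro c _
    unfold armQ legQ hookQ
    ring
  rw [Finset.prod_congr rfl h1, Finset.prod_congr rfl h2]
  unfold Hk
  ring

lemma summand_eq (α₁ α₂ : ℚ) (Y : YoungDiagram) :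
    Zb α₁ ⊥ Y * Zb α₂ Y ⊥ / Z0 Y = T α₁ (-α₂) Y := by
  rw [Zb_bot_right, Zb_bot_left, Z0_eq]
  unfold T
  rfl

end U1

/-- Sum rule for the `U(1)` matrix elements:
`∑_Y t^{|Y|} Z_b(α₁|∅,Y) Z_b(α₂|Y,∅) / Z₀(Y) = (1-t)^{α₁α₂}`, stated coefficientwise in `t`:
the sum over partitions of `n` equals the `n`-th coefficient `(-α₁α₂)_n/n!` of
`(1-t)^{α₁α₂}`. -/
theorem u1_sum_rule (α₁ α₂ : ℚ) (n : ℕ) :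
    (∑ᶠ Y : {Y : YoungDiagram // Y.cells.card = n},
        Zb α₁ ⊥ Y.1 * Zb α₂ Y.1 ⊥ / Z0 Y.1)
      = (ascPochhammer ℚ n).eval (-(α₁ * α₂)) / (Nat.factorial n : ℚ) := by
  rw [finsum_eq_sum_of_fintype]
  have h1 : ∀ Y : {Y : YoungDiagram // Y.cells.card = n},
      Zb α₁ ⊥ Y.1 * Zb α₂ Y.1 ⊥ / Z0 Y.1 = U1.T α₁ (-α₂) Y.1 :=
    fun Y => U1.summand_eq α₁ α₂ Y.1
  rw [Finset.sum_congr rfl fun Y _ => h1 Y]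
  have h2 := U1.main_sum α₁ (-α₂) n
  rw [h2]
  congr 2
  ring
end

section
/- Bilinear commutation for the charge-shift-invariant operator: let $\mathcal O$ be an invertible operator on the fermionic Fock space whose adjoint action on fermion modes is linear, $\mathcal O^{-1}\psi_r\mathcal O=\sum_s R_{rs}\psi_s$ and $\mathcal O^{-1}\tilde\psi_{-r}\mathcal O=\sum_s\tilde\psi_{-s}(R^{-1})_{sr}$ (with $R$ row/column finite so all sums are finite on each vector). Then $(\mathcal O\otimes\mathcal O)\circ\Omega = \Omega\circ(\mathcal O\otimes\mathcal O)$ on $\mathcal H\otimes\mathcal H$, where $\Omega=\sum_{r}\psi_{-r}\otimes\tilde\psi_{r}$ (the Casimir/Hirota operator). -/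
open TensorProduct

section HirotaAux

variable {H : Type*} [AddCommGroup H] [Module ℂ H]

private lemma hirota_smul_cancel {c : ℂ} {x : H} (h : c • x = 0) (hx : x ≠ 0) : c = 0 := by
  by_contra hc
  apply hx
  have h2 := congrArg (fun y : H => c⁻¹ • y) h
  simpa [smul_smul, inv_mul_cancel₀ hc] using h2

private lemma hirota_tmul_ne_zero {x y : H} (hx : x ≠ 0) (hy : y ≠ 0) :
    x ⊗ₜ[ℂ] y ≠ (0 : H ⊗[ℂ] H) := by
  obtain ⟨φ, hφ⟩ : ∃ φ : Module.Dual ℂ H, φ x ≠ 0 := by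
    by_contra hcon
    push_neg at hcon
    exact hx ((Module.forall_dual_apply_eq_zero_iff ℂ x).mp hcon)
  obtain ⟨χ, hχ⟩ : ∃ χ : Module.Dual ℂ H, χ y ≠ 0 := by
    by_contra hcon
    push_neg at hcon
    exact hy ((Module.forall_dual_apply_eq_zero_iff ℂ y).mp hcon)
  intro h0
  have h1 : (TensorProduct.lid ℂ ℂ) (TensorProduct.map φ χ (x ⊗ₜ[ℂ] y)) = φ x * χ y := by
    simp [TensorProduct.map_tmul, TensorProduct.lid_tmul, smul_eq_mul]
  rw [h0] at h1
  simp only [map_zero] at h1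
  exact mul_ne_zero hφ hχ h1.symm

private lemma hirota_lmap_finsum {α M N : Type*} [AddCommGroup M] [AddCommGroup N]
    [Module ℂ M] [Module ℂ N] (L : M →ₗ[ℂ] N) {f : α → M}
    (hf : (Function.support f).Finite) : L (∑ᶠ i, f i) = ∑ᶠ i, L (f i) :=
  L.toAddMonoidHom.map_finsum hf

/-- The involution `n ↦ -n-1` of `ℤ`. -/
private def hirota_negSub : ℤ ≃ ℤ :=
  ⟨fun n => -n - 1, fun n => -n - 1, fun n => by ring, fun n => by ring⟩

private lemma hirota_reindex_tmul (ψ ψt : ℤ → Module.End ℂ H) (g h : H) :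
    (∑ᶠ k : ℤ, ((ψ (-k - 1)) g) ⊗ₜ[ℂ] ((ψt k) h))
      = ∑ᶠ u : ℤ, ((ψ u) g) ⊗ₜ[ℂ] ((ψt (-u - 1)) h) := by
  have h1 : ∀ k : ℤ, ((ψ (-k - 1)) g) ⊗ₜ[ℂ] ((ψt k) h)
      = (fun u : ℤ => ((ψ u) g) ⊗ₜ[ℂ] ((ψt (-u - 1)) h)) (hirota_negSub k) := by
    intro k
    simp only [hirota_negSub, Equiv.coe_fn_mk, show (-(-k - 1) - 1 : ℤ) = k by ring]
  calc (∑ᶠ k : ℤ, ((ψ (-k - 1)) g) ⊗ₜ[ℂ] ((ψt k) h))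
      = ∑ᶠ k : ℤ, (fun u : ℤ => ((ψ u) g) ⊗ₜ[ℂ] ((ψt (-u - 1)) h)) (hirota_negSub k) :=
        finsum_congr h1
    _ = ∑ᶠ u : ℤ, ((ψ u) g) ⊗ₜ[ℂ] ((ψt (-u - 1)) h) :=
        finsum_comp_equiv (f := fun u : ℤ => ((ψ u) g) ⊗ₜ[ℂ] ((ψt (-u - 1)) h)) hirota_negSub

private lemma hirota_pair_finite (ψ ψt : ℤ → Module.End ℂ H)
    (hfin : ∀ x : H ⊗[ℂ] H,
      (Function.support fun k : ℤ =>
        TensorProduct.map (ψ (-k - 1) : H →ₗ[ℂ] H) (ψt k : H →ₗ[ℂ] H) x).Finite)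
    (e f : H) : {p : ℤ | ψ p e ≠ 0 ∧ ψt (-p - 1) f ≠ 0}.Finite := by
  refine Set.Finite.subset ((hfin (e ⊗ₜ[ℂ] f)).image fun k => -k - 1) ?_
  rintro p ⟨h1, h2⟩
  refine ⟨-p - 1, ?_, by ring⟩
  simp only [Function.mem_support, TensorProduct.map_tmul]
  rw [show (-(-p - 1) - 1 : ℤ) = p by ring]
  exact hirota_tmul_ne_zero h1 h2

private lemma hirota_coeff_vanish_psi (ψ ψt : ℤ → Module.End ℂ H)
    (hanti : ∀ k l : ℤ, ψ k * ψt l + ψt l * ψ k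
      = if k + l + 1 = 0 then (1 : Module.End ℂ H) else 0)
    {e : H} (he : e ≠ 0) {a : ℤ} {c : ℤ → ℂ} (hc : (Function.support c).Finite)
    (hsum : (∑ᶠ l : ℤ, c l • ψ l e) = 0) (ha : ψt (-a - 1) e = 0) : c a = 0 := by
  have hsupp : (Function.support fun l : ℤ => c l • ψ l e).Finite := by
    refine hc.subset fun l hl => ?_
    simp only [Function.mem_support] at hl ⊢
    intro h0
    exact hl (by rw [h0, zero_smul])
  have hcar : ∀ l : ℤ, (ψt (-a - 1)) ((ψ l) e) = if l = a then e else 0 := by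
    intro l
    have h2 := congrArg (fun g : Module.End ℂ H => g e) (hanti l (-a - 1))
    simp only [LinearMap.add_apply, Module.End.mul_apply] at h2
    rw [ha, map_zero, zero_add] at h2
    rw [h2]
    by_cases hl : l = a
    · rw [if_pos (by omega : l + (-a - 1) + 1 = 0), if_pos hl]
      exact Module.End.one_apply e
    · rw [if_neg (by omega : ¬ l + (-a - 1) + 1 = 0), if_neg hl]
      exact LinearMap.zero_apply e
  have happ : (∑ᶠ l : ℤ, c l • (if l = a then e else (0 : H))) = 0 := by
    have h4 : (fun l : ℤ => c l • (if l = a then e else (0 : H)))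
        = fun l : ℤ => (ψt (-a - 1)) (c l • ψ l e) :=
      funext fun l => by rw [map_smul, hcar l]
    rw [h4, ← hirota_lmap_finsum (ψt (-a - 1)) hsupp, hsum, map_zero]
  have hsing : (∑ᶠ l : ℤ, c l • (if l = a then e else (0 : H))) = c a • e := by
    rw [finsum_eq_single _ a (fun x hx => by simp only [if_neg hx, smul_zero])]
    simp
  rw [hsing] at happ
  exact hirota_smul_cancel happ he

private lemma hirota_coeff_vanish_psit (ψ ψt : ℤ → Module.End ℂ H)
    (hanti : ∀ k l : ℤ, ψ k * ψt l + ψt l * ψ k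
      = if k + l + 1 = 0 then (1 : Module.End ℂ H) else 0)
    {f : H} (hf : f ≠ 0) {b : ℤ} {c : ℤ → ℂ} (hc : (Function.support c).Finite)
    (hsum : (∑ᶠ l : ℤ, c l • ψt (-l - 1) f) = 0) (hb : ψ b f = 0) : c b = 0 := by
  have hsupp : (Function.support fun l : ℤ => c l • ψt (-l - 1) f).Finite := by
    refine hc.subset fun l hl => ?_
    simp only [Function.mem_support] at hl ⊢
    intro h0
    exact hl (by rw [h0, zero_smul])
  have hcar : ∀ l : ℤ, (ψ b) ((ψt (-l - 1)) f) = if l = b then f else 0 := by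
    intro l
    have h2 := congrArg (fun g : Module.End ℂ H => g f) (hanti b (-l - 1))
    simp only [LinearMap.add_apply, Module.End.mul_apply] at h2
    rw [hb, map_zero, add_zero] at h2
    rw [h2]
    by_cases hl : l = b
    · rw [if_pos (by omega : b + (-l - 1) + 1 = 0), if_pos hl]
      exact Module.End.one_apply f
    · rw [if_neg (by omega : ¬ b + (-l - 1) + 1 = 0), if_neg hl]
      exact LinearMap.zero_apply f
  have happ : (∑ᶠ l : ℤ, c l • (if l = b then f else (0 : H))) = 0 := by
    have h4 : (fun l : ℤ => c l • (if l = b then f else (0 : H)))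
        = fun l : ℤ => (ψ b) (c l • ψt (-l - 1) f) :=
      funext fun l => by rw [map_smul, hcar l]
    rw [h4, ← hirota_lmap_finsum (ψ b) hsupp, hsum, map_zero]
  have hsing : (∑ᶠ l : ℤ, c l • (if l = b then f else (0 : H))) = c b • f := by
    rw [finsum_eq_single _ b (fun x hx => by simp only [if_neg hx, smul_zero])]
    simp
  rw [hsing] at happ
  exact hirota_smul_cancel happ hf

end HirotaAux

/-- Bilinear (Hirota) commutation for a `GL(∞)`-type operator.  The free fermion modes
`ψ_r, ψ̃_r` (`r ∈ ℤ + 1/2`) are encoded as `ψ k, ψt k` (`k ∈ ℤ`, `r = k + 1/2`) acting on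
the Fock space `H`; they satisfy `{ψ_r, ψ̃_s} = δ_{r+s,0}` and the other anticommutators
vanish.  Let `O` be an invertible operator whose adjoint action on the fermion modes is
linear: `O⁻¹ ψ_r O = ∑_s R_{rs} ψ_s`, `O⁻¹ ψ̃_{-r} O = ∑_s ψ̃_{-s} (R⁻¹)_{sr}`, with `R`
row- and column-finite and `R⁻¹` a two-sided inverse.  Then the Casimir/Hirota operator
`Ω = ∑_{r∈ℤ+1/2} ψ_{-r} ⊗ ψ̃_r` (acting pointwise by the finite sum
`Ω x = ∑ᶠ k, (ψ(-k-1) ⊗ ψ̃(k)) x`) commutes with `O ⊗ O`. -/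
theorem hirota_bilinear_commutation {H : Type*} [AddCommGroup H] [Module ℂ H]
    (ψ ψt : ℤ → Module.End ℂ H) (O : H ≃ₗ[ℂ] H) (R Rinv : ℤ → ℤ → ℂ)
    (hanti : ∀ k l : ℤ, ψ k * ψt l + ψt l * ψ k
      = if k + l + 1 = 0 then (1 : Module.End ℂ H) else 0)
    (hpsi : ∀ k l : ℤ, ψ k * ψ l + ψ l * ψ k = 0)
    (hpsit : ∀ k l : ℤ, ψt k * ψt l + ψt l * ψt k = 0)
    (hRrow : ∀ k : ℤ, (Function.support fun l => R k l).Finite)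
    (hRcol : ∀ l : ℤ, (Function.support fun k => R k l).Finite)
    (hRinvRow : ∀ k : ℤ, (Function.support fun l => Rinv k l).Finite)
    (hRinvCol : ∀ l : ℤ, (Function.support fun k => Rinv k l).Finite)
    (hinv : ∀ k l : ℤ, (∑ᶠ u : ℤ, R k u * Rinv u l) = if k = l then 1 else 0)
    (hinv' : ∀ k l : ℤ, (∑ᶠ u : ℤ, Rinv k u * R u l) = if k = l then 1 else 0)
    (hconj : ∀ (k : ℤ) (x : H), O.symm (ψ k (O x)) = ∑ᶠ l : ℤ, R k l • ψ l x)
    (hconjt : ∀ (k : ℤ) (x : H),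
      O.symm (ψt (-k - 1) (O x)) = ∑ᶠ l : ℤ, Rinv l k • ψt (-l - 1) x)
    (hfin : ∀ x : H ⊗[ℂ] H,
      (Function.support fun k : ℤ =>
        TensorProduct.map (ψ (-k - 1) : H →ₗ[ℂ] H) (ψt k : H →ₗ[ℂ] H) x).Finite) :
    ∀ x : H ⊗[ℂ] H,
      TensorProduct.map O.toLinearMap O.toLinearMap
          (∑ᶠ k : ℤ, TensorProduct.map (ψ (-k - 1) : H →ₗ[ℂ] H) (ψt k : H →ₗ[ℂ] H) x)
        = ∑ᶠ k : ℤ, TensorProduct.map (ψ (-k - 1) : H →ₗ[ℂ] H) (ψt k : H →ₗ[ℂ] H)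
            (TensorProduct.map O.toLinearMap O.toLinearMap x) := by
  classical
  -- the core identity, for pure tensors
  have core : ∀ e f : H,
      (∑ᶠ u : ℤ, (O.symm ((ψ u) (O e))) ⊗ₜ[ℂ] (O.symm ((ψt (-u - 1)) (O f))))
        = ∑ᶠ a : ℤ, ((ψ a) e) ⊗ₜ[ℂ] ((ψt (-a - 1)) f) := by
    intro e f
    by_cases he : e = 0
    · subst he
      simp only [map_zero, TensorProduct.zero_tmul, finsum_zero]
    by_cases hf : f = 0
    · subst hf
      simp only [map_zero, TensorProduct.tmul_zero, finsum_zero]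
    -- finite index sets
    have hPQ' : {u : ℤ | (ψ u) (O e) ≠ 0 ∧ (ψt (-u - 1)) (O f) ≠ 0}.Finite :=
      hirota_pair_finite ψ ψt hfin (O e) (O f)
    have hS1 : {a : ℤ | (ψ a) e ≠ 0 ∧ (ψt (-a - 1)) e ≠ 0}.Finite :=
      hirota_pair_finite ψ ψt hfin e e
    have hS2 : {b : ℤ | (ψ b) f ≠ 0 ∧ (ψt (-b - 1)) f ≠ 0}.Finite :=
      hirota_pair_finite ψ ψt hfin f f
    set U0 : Set ℤ := {u : ℤ | (ψ u) (O e) ≠ 0 ∧ (ψt (-u - 1)) (O f) ≠ 0} ∪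
      ((⋃ a ∈ {a : ℤ | (ψ a) e ≠ 0 ∧ (ψt (-a - 1)) e ≠ 0},
          Function.support fun u => R u a) ∪
        (⋃ b ∈ {b : ℤ | (ψ b) f ≠ 0 ∧ (ψt (-b - 1)) f ≠ 0},
          Function.support fun u => Rinv b u)) with hU0def
    have hU0 : U0.Finite :=
      hPQ'.union ((hS1.biUnion fun a _ => hRcol a).union (hS2.biUnion fun b _ => hRinvRow b))
    -- the key rigidity statement
    have keyU : ∀ u a b : ℤ, R u a ≠ 0 → Rinv b u ≠ 0 →
        (ψ a) e ≠ 0 → (ψt (-b - 1)) f ≠ 0 → u ∈ U0 := by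
      intro u a b hRa hRb hae hbf
      by_cases ha : (ψt (-a - 1)) e = 0
      · by_cases hb : (ψ b) f = 0
        · left
          constructor
          · intro h0
            have hsum : (∑ᶠ l : ℤ, R u l • (ψ l) e) = 0 := by
              rw [← hconj u e, h0, map_zero]
            exact hRa (hirota_coeff_vanish_psi ψ ψt hanti he (hRrow u) hsum ha)
          · intro h0
            have hsum : (∑ᶠ l : ℤ, Rinv l u • (ψt (-l - 1)) f) = 0 := by
              rw [← hconjt u f, h0, map_zero]
            exact hRb (hirota_coeff_vanish_psit ψ ψt hanti hf (c := fun l => Rinv l u) (hRinvCol u) hsum hb)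
        · right; right
          exact Set.mem_biUnion ⟨hb, hbf⟩ hRb
      · right; left
        exact Set.mem_biUnion ⟨hae, ha⟩ hRa
    set U : Finset ℤ := hU0.toFinset with hUdef
    have hUmem : ∀ {u : ℤ}, u ∈ U0 → u ∈ U := fun h => (Set.Finite.mem_toFinset hU0).mpr h
    set A1 : Finset ℤ := U.biUnion (fun u => (hRrow u).toFinset) with hA1def
    set B1 : Finset ℤ := U.biUnion (fun u => (hRinvCol u).toFinset) with hB1def
    have hmemA1 : ∀ {u a : ℤ}, u ∈ U → R u a ≠ 0 → a ∈ A1 := by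
      intro u a hu hra
      exact Finset.mem_biUnion.mpr ⟨u, hu, (Set.Finite.mem_toFinset _).mpr hra⟩
    have hmemB1 : ∀ {u b : ℤ}, u ∈ U → Rinv b u ≠ 0 → b ∈ B1 := by
      intro u b hu hrb
      exact Finset.mem_biUnion.mpr ⟨u, hu, (Set.Finite.mem_toFinset _).mpr hrb⟩
    -- left-hand side becomes a finite sum over U
    have hsupport1 : (Function.support fun u : ℤ =>
        (O.symm ((ψ u) (O e))) ⊗ₜ[ℂ] (O.symm ((ψt (-u - 1)) (O f)))) ⊆ ↑U := by
      intro u hu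
      simp only [Function.mem_support] at hu
      have h1 : (ψ u) (O e) ≠ 0 := by
        intro h
        exact hu (by rw [h, map_zero, TensorProduct.zero_tmul])
      have h2 : (ψt (-u - 1)) (O f) ≠ 0 := by
        intro h
        exact hu (by rw [h, map_zero, TensorProduct.tmul_zero])
      exact Finset.mem_coe.mpr (hUmem (Or.inl ⟨h1, h2⟩))
    rw [finsum_eq_finset_sum_of_support_subset _ hsupport1]
    -- expand each term as a finite double sum
    have hterm : ∀ u ∈ U, (O.symm ((ψ u) (O e))) ⊗ₜ[ℂ] (O.symm ((ψt (-u - 1)) (O f)))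
        = ∑ a ∈ A1, ∑ b ∈ B1,
            (R u a * Rinv b u) • (((ψ a) e) ⊗ₜ[ℂ] ((ψt (-b - 1)) f)) := by
      intro u hu
      have hsubA : (Function.support fun l : ℤ => R u l • (ψ l) e) ⊆ ↑A1 := by
        intro l hl
        have hRl : R u l ≠ 0 := by
          intro h
          exact hl (by simp [Function.mem_support, h])
        exact Finset.mem_coe.mpr (hmemA1 hu hRl)
      have hsubB : (Function.support fun l : ℤ => Rinv l u • (ψt (-l - 1)) f) ⊆ ↑B1 := by
        intro l hl
        have hRl : Rinv l u ≠ 0 := by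
          intro h
          exact hl (by simp [Function.mem_support, h])
        exact Finset.mem_coe.mpr (hmemB1 hu hRl)
      rw [hconj u e, hconjt u f,
        finsum_eq_finset_sum_of_support_subset _ hsubA,
        finsum_eq_finset_sum_of_support_subset _ hsubB,
        TensorProduct.sum_tmul]
      refine Finset.sum_congr rfl fun a _ => ?_
      rw [TensorProduct.tmul_sum]
      refine Finset.sum_congr rfl fun b _ => ?_
      rw [TensorProduct.smul_tmul_smul]
    rw [Finset.sum_congr rfl hterm]
    -- interchange the finite sums
    rw [Finset.sum_comm]
    rw [Finset.sum_congr rfl fun a _ => Finset.sum_comm (s := U) (t := B1)]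
    -- contract the coefficients using hinv'
    have hcoef : ∀ a b : ℤ,
        (∑ u ∈ U, (R u a * Rinv b u) • (((ψ a) e) ⊗ₜ[ℂ] ((ψt (-b - 1)) f)))
          = if b = a then ((ψ a) e) ⊗ₜ[ℂ] ((ψt (-b - 1)) f) else 0 := by
      intro a b
      by_cases hv : ((ψ a) e) ⊗ₜ[ℂ] ((ψt (-b - 1)) f) = (0 : H ⊗[ℂ] H)
      · rw [hv]
        simp
      · have hae : (ψ a) e ≠ 0 := by
          intro h
          exact hv (by rw [h, TensorProduct.zero_tmul])
        have hbf : (ψt (-b - 1)) f ≠ 0 := by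
          intro h
          exact hv (by rw [h, TensorProduct.tmul_zero])
        have hsub : (Function.support fun u : ℤ => Rinv b u * R u a) ⊆ ↑U := by
          intro u hu
          have h1 : Rinv b u ≠ 0 := by
            intro h
            exact hu (by simp [Function.mem_support, h])
          have h2 : R u a ≠ 0 := by
            intro h
            exact hu (by simp [Function.mem_support, h])
          exact Finset.mem_coe.mpr (hUmem (keyU u a b h2 h1 hae hbf))
        have hUsum : (∑ u ∈ U, R u a * Rinv b u) = if b = a then 1 else 0 := by
          calc (∑ u ∈ U, R u a * Rinv b u)
              = ∑ u ∈ U, Rinv b u * R u a :=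
                Finset.sum_congr rfl fun u _ => mul_comm _ _
            _ = ∑ᶠ u : ℤ, Rinv b u * R u a :=
                (finsum_eq_finset_sum_of_support_subset _ hsub).symm
            _ = if b = a then 1 else 0 := hinv' b a
        rw [← Finset.sum_smul, hUsum]
        split_ifs with h
        · rw [one_smul]
        · rw [zero_smul]
    rw [Finset.sum_congr rfl fun a _ => Finset.sum_congr rfl fun b _ => hcoef a b]
    rw [Finset.sum_congr rfl fun a _ =>
      Finset.sum_ite_eq' B1 a (fun b => ((ψ a) e) ⊗ₜ[ℂ] ((ψt (-b - 1)) f))]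
    rw [Finset.sum_ite_mem A1 B1 (fun a => ((ψ a) e) ⊗ₜ[ℂ] ((ψt (-a - 1)) f))]
    -- identify with the right-hand side
    have hsuppRHS : (Function.support fun a : ℤ =>
        ((ψ a) e) ⊗ₜ[ℂ] ((ψt (-a - 1)) f)) ⊆ ↑(A1 ∩ B1) := by
      intro a ha
      simp only [Function.mem_support] at ha
      have hae : (ψ a) e ≠ 0 := by
        intro h
        exact ha (by rw [h, TensorProduct.zero_tmul])
      have haf : (ψt (-a - 1)) f ≠ 0 := by
        intro h
        exact ha (by rw [h, TensorProduct.tmul_zero])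
      have h1 : (∑ᶠ u : ℤ, Rinv a u * R u a) = 1 := by rw [hinv' a a, if_pos rfl]
      have h2 : ∃ u : ℤ, Rinv a u * R u a ≠ 0 := by
        by_contra hcon
        push_neg at hcon
        rw [finsum_eq_zero_of_forall_eq_zero hcon] at h1
        exact one_ne_zero h1.symm
      obtain ⟨u0, hu0⟩ := h2
      have hr1 : Rinv a u0 ≠ 0 := left_ne_zero_of_mul hu0
      have hr2 : R u0 a ≠ 0 := right_ne_zero_of_mul hu0
      have hu0U : u0 ∈ U := hUmem (keyU u0 a a hr2 hr1 hae haf)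
      exact Finset.mem_coe.mpr (Finset.mem_inter.mpr ⟨hmemA1 hu0U hr2, hmemB1 hu0U hr1⟩)
    rw [finsum_eq_finset_sum_of_support_subset _ hsuppRHS]
  -- finiteness of the support of the conjugated family
  have hsuppconj : ∀ e f : H, (Function.support fun u : ℤ =>
      (O.symm ((ψ u) (O e))) ⊗ₜ[ℂ] (O.symm ((ψt (-u - 1)) (O f)))).Finite := by
    intro e f
    refine (hirota_pair_finite ψ ψt hfin (O e) (O f)).subset ?_
    intro u hu
    simp only [Function.mem_support] at hu
    constructor
    · intro h
      exact hu (by rw [h, map_zero, TensorProduct.zero_tmul])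
    · intro h
      exact hu (by rw [h, map_zero, TensorProduct.tmul_zero])
  -- the theorem itself
  intro x
  induction x using TensorProduct.induction_on with
  | zero => simp only [map_zero, finsum_zero]
  | tmul e f =>
    have hmapOO : TensorProduct.map O.toLinearMap O.toLinearMap (e ⊗ₜ[ℂ] f)
        = (O e) ⊗ₜ[ℂ] (O f) := by
      rw [TensorProduct.map_tmul]
      rfl
    rw [hmapOO]
    have hR : (∑ᶠ k : ℤ, TensorProduct.map (ψ (-k - 1) : H →ₗ[ℂ] H) (ψt k : H →ₗ[ℂ] H)
        ((O e) ⊗ₜ[ℂ] (O f)))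
        = ∑ᶠ u : ℤ, ((ψ u) (O e)) ⊗ₜ[ℂ] ((ψt (-u - 1)) (O f)) := by
      calc (∑ᶠ k : ℤ, TensorProduct.map (ψ (-k - 1) : H →ₗ[ℂ] H) (ψt k : H →ₗ[ℂ] H)
          ((O e) ⊗ₜ[ℂ] (O f)))
          = ∑ᶠ k : ℤ, ((ψ (-k - 1)) (O e)) ⊗ₜ[ℂ] ((ψt k) (O f)) :=
            finsum_congr fun k => TensorProduct.map_tmul _ _ _ _
        _ = ∑ᶠ u : ℤ, ((ψ u) (O e)) ⊗ₜ[ℂ] ((ψt (-u - 1)) (O f)) :=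
            hirota_reindex_tmul ψ ψt (O e) (O f)
    have hL : (∑ᶠ k : ℤ, TensorProduct.map (ψ (-k - 1) : H →ₗ[ℂ] H) (ψt k : H →ₗ[ℂ] H)
        (e ⊗ₜ[ℂ] f))
        = ∑ᶠ a : ℤ, ((ψ a) e) ⊗ₜ[ℂ] ((ψt (-a - 1)) f) := by
      calc (∑ᶠ k : ℤ, TensorProduct.map (ψ (-k - 1) : H →ₗ[ℂ] H) (ψt k : H →ₗ[ℂ] H)
          (e ⊗ₜ[ℂ] f))
          = ∑ᶠ k : ℤ, ((ψ (-k - 1)) e) ⊗ₜ[ℂ] ((ψt k) f) :=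
            finsum_congr fun k => TensorProduct.map_tmul _ _ _ _
        _ = ∑ᶠ a : ℤ, ((ψ a) e) ⊗ₜ[ℂ] ((ψt (-a - 1)) f) :=
            hirota_reindex_tmul ψ ψt e f
    rw [hR, hL, ← core e f]
    rw [hirota_lmap_finsum (TensorProduct.map O.toLinearMap O.toLinearMap) (hsuppconj e f)]
    refine finsum_congr fun u => ?_
    rw [TensorProduct.map_tmul]
    show ((O (O.symm ((ψ u) (O e)))) ⊗ₜ[ℂ] (O (O.symm ((ψt (-u - 1)) (O f))))) = _
    rw [O.apply_symm_apply, O.apply_symm_apply]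
  | add x y hx hy =>
    have e1 : (∑ᶠ k : ℤ, TensorProduct.map (ψ (-k - 1) : H →ₗ[ℂ] H)
        (ψt k : H →ₗ[ℂ] H) (x + y))
        = (∑ᶠ k : ℤ, TensorProduct.map (ψ (-k - 1) : H →ₗ[ℂ] H) (ψt k : H →ₗ[ℂ] H) x)
          + ∑ᶠ k : ℤ, TensorProduct.map (ψ (-k - 1) : H →ₗ[ℂ] H) (ψt k : H →ₗ[ℂ] H) y := by
      rw [← finsum_add_distrib (hfin x) (hfin y)]
      exact finsum_congr fun k => map_add _ _ _
    have e2 : (∑ᶠ k : ℤ, TensorProduct.map (ψ (-k - 1) : H →ₗ[ℂ] H) (ψt k : H →ₗ[ℂ] H)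
        (TensorProduct.map O.toLinearMap O.toLinearMap (x + y)))
        = (∑ᶠ k : ℤ, TensorProduct.map (ψ (-k - 1) : H →ₗ[ℂ] H) (ψt k : H →ₗ[ℂ] H)
            (TensorProduct.map O.toLinearMap O.toLinearMap x))
          + ∑ᶠ k : ℤ, TensorProduct.map (ψ (-k - 1) : H →ₗ[ℂ] H) (ψt k : H →ₗ[ℂ] H)
            (TensorProduct.map O.toLinearMap O.toLinearMap y) := by
      rw [map_add (TensorProduct.map O.toLinearMap O.toLinearMap)]
      rw [← finsum_add_distrib (hfin _) (hfin _)]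
      exact finsum_congr fun k => map_add _ _ _
    rw [e1, map_add, hx, hy, e2]
end
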